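/- arXiv:2304.14642 — 8 statements merged into one kernel-verified Lean document; each statement's English description precedes it below -/
import Mathlib

section
/- For every γ ∈ (0,1) and every step size s > 0, there exists t₀ > 3γ√s (depending only on γ and s) such that the solution X of the high-resolution differential equation obeys, for all t ≥ t₀, f(X(t) + √s Ẋ(t)) − f(x⋆) ≤ E(t₀) / (t^γ (t^γ − 2γ√s t^{γ−1})), where E is the continuous Lyapunov function. -/
open Set Filter Topology InnerProductSpace

local notation "⟪" x ", " y "⟫" => @inner ℝ _ _ x y

lemma grad_convex_ineq {E : Type*} [NormedAddCommGroup E] [InnerProductSpace ℝ E]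
    [CompleteSpace E] {f : E → ℝ} {g : E → E} (hconv : ConvexOn ℝ Set.univ f)
    (hg : ∀ z, HasGradientAt f (g z) z) (x y : E) :
    f x + ⟪g x, y - x⟫ ≤ f y := by
  have hc : ∀ θ : ℝ, HasDerivAt (fun θ : ℝ => x + θ • (y - x)) (y - x) θ := by
    intro θ
    simpa using ((hasDerivAt_id θ).smul_const (y - x)).const_add x
  have hh : ∀ θ : ℝ, HasDerivAt (fun θ : ℝ => f (x + θ • (y - x)))
      ⟪g (x + θ • (y - x)), y - x⟫ θ := by
    intro θ
    have := (hg (x + θ • (y - x))).hasFDerivAt.comp_hasDerivAt θ (hc θ)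
    simp [InnerProductSpace.toDual_apply_apply] at this
    exact this
  have hconvh : ConvexOn ℝ Set.univ (fun θ : ℝ => f (x + θ • (y - x))) := by
    refine ⟨convex_univ, fun u _ v _ a b ha hb hab => ?_⟩
    have key : x + (a * u + b * v) • (y - x)
        = a • (x + u • (y - x)) + b • (x + v • (y - x)) := by
      have hb' : b = 1 - a := by linarith
      subst hb'
      module
    simp only [smul_eq_mul, key]
    exact hconv.2 (mem_univ _) (mem_univ _) ha hb hab
  have := hconvh.le_slope_of_hasDerivAt (mem_univ (0:ℝ)) (mem_univ (1:ℝ)) one_pos (hh 0)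
  simp only [slope_def_field, zero_smul, add_zero, one_smul, add_sub_cancel] at this
  norm_num at this
  linarith

/-- The continuous Lyapunov function for the underdamped high-resolution ODE. -/
noncomputable def lyapCont (γ s : ℝ) {d : ℕ} (f : EuclideanSpace ℝ (Fin d) → ℝ)
    (xstar : EuclideanSpace ℝ (Fin d)) (X V : ℝ → EuclideanSpace ℝ (Fin d)) (t : ℝ) : ℝ :=
  (t ^ γ * (t ^ γ - 2 * γ * Real.sqrt s * t ^ (γ - 1)) / (t - 3 * γ * Real.sqrt s)) *
      (t + 3 * γ * Real.sqrt s / 2) * (f (X t + Real.sqrt s • V t) - f xstar) +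
    (1 / 2) * ‖(t ^ γ) • V t + (2 * γ * t ^ (γ - 1)) • (X t - xstar)‖ ^ 2 +
    γ * (1 - γ) * t ^ (2 * (γ - 1)) * ‖X t - xstar‖ ^ 2

set_option maxHeartbeats 2000000 in
lemma deriv_step (γ s σ : ℝ) (hγ0 : 0 < γ) (hγ1 : γ < 1) (hσ0 : 0 < σ)
    (hσdef : Real.sqrt s = σ)
    {d : ℕ} (f : EuclideanSpace ℝ (Fin d) → ℝ)
    (f' : EuclideanSpace ℝ (Fin d) → EuclideanSpace ℝ (Fin d))
    (xstar : EuclideanSpace ℝ (Fin d)) (X V : ℝ → EuclideanSpace ℝ (Fin d))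
    (hconv : ConvexOn ℝ Set.univ f)
    (hgrad : ∀ z, HasGradientAt f (f' z) z)
    (hmin : ∀ z, f xstar ≤ f z)
    (hX : ∀ t ∈ Set.Ioi (0 : ℝ), HasDerivAt X (V t) t)
    (hV : ∀ t ∈ Set.Ioi (0 : ℝ), HasDerivAt V
      (-((3 * γ / t) • V t +
          (1 + 3 * γ * σ / (2 * t)) • f' (X t + σ • V t))) t)
    (x : ℝ) (hx : 3 * γ * σ < x) :
    ∃ v, HasDerivAt (lyapCont γ s f xstar X V) v x ∧ v ≤ 0 := by
  have hb0 : 0 < 3 * γ * σ := by positivity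
  have hx0 : 0 < x := lt_trans hb0 hx
  have hXd : HasDerivAt X (V x) x := hX x hx0
  have hVd : HasDerivAt V
      (-((3 * γ / x) • V x + (1 + 3 * γ * σ / (2 * x)) • f' (X x + σ • V x))) x :=
    hV x hx0
  have hWd : HasDerivAt (fun t => X t - xstar) (V x) x := hXd.sub_const _
  have hra : HasDerivAt (fun t : ℝ => t ^ γ) (γ * x ^ (γ - 1)) x :=
    Real.hasDerivAt_rpow_const (Or.inl hx0.ne')
  have hrb : HasDerivAt (fun t : ℝ => t ^ (γ - 1)) ((γ - 1) * x ^ (γ - 1 - 1)) x :=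
    Real.hasDerivAt_rpow_const (Or.inl hx0.ne')
  have hrc : HasDerivAt (fun t : ℝ => t ^ (2 * (γ - 1)))
      ((2 * (γ - 1)) * x ^ (2 * (γ - 1) - 1)) x :=
    Real.hasDerivAt_rpow_const (Or.inl hx0.ne')
  have hYd : HasDerivAt (fun t => X t + σ • V t)
      (V x + σ • (-((3 * γ / x) • V x + (1 + 3 * γ * σ / (2 * x)) • f' (X x + σ • V x)))) x :=
    hXd.add (hVd.const_smul σ)
  have hφd : HasDerivAt (fun t => f (X t + σ • V t) - f xstar)
      ⟪f' (X x + σ • V x),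
        V x + σ • (-((3 * γ / x) • V x + (1 + 3 * γ * σ / (2 * x)) • f' (X x + σ • V x)))⟫ x := by
    have h := ((hgrad (X x + σ • V x)).hasFDerivAt.comp_hasDerivAt x hYd).sub_const (f xstar)
    simpa [InnerProductSpace.toDual_apply_apply] using h

  have hWd : HasDerivAt (fun t => X t - xstar) (V x) x := hXd.sub_const _
  have hra : HasDerivAt (fun t : ℝ => t ^ γ) (γ * x ^ (γ - 1)) x :=
    Real.hasDerivAt_rpow_const (Or.inl hx0.ne')
  have hrb : HasDerivAt (fun t : ℝ => t ^ (γ - 1)) ((γ - 1) * x ^ (γ - 1 - 1)) x :=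
    Real.hasDerivAt_rpow_const (Or.inl hx0.ne')
  have hrc : HasDerivAt (fun t : ℝ => t ^ (2 * (γ - 1)))
      ((2 * (γ - 1)) * x ^ (2 * (γ - 1) - 1)) x :=
    Real.hasDerivAt_rpow_const (Or.inl hx0.ne')
  have hu := (hra.smul hVd).add ((hrb.const_mul (2 * γ)).smul hWd)
  have hn1 := hu.inner ℝ hu
  simp only [real_inner_self_eq_norm_sq] at hn1
  have hn1h := hn1.const_mul (1/2 : ℝ)
  have hn2 := hWd.inner ℝ hWd
  simp only [real_inner_self_eq_norm_sq] at hn2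
  have hnum := hra.mul (hra.sub (hrb.const_mul (2 * γ * σ)))
  have hden := (hasDerivAt_id x).sub_const (3 * γ * σ)
  have hDnne : x - 3 * γ * σ ≠ 0 := ne_of_gt (by linarith)
  have hdiv := hnum.div hden (by simpa using hDnne)
  have hM := (hasDerivAt_id x).add_const (3 * γ * σ / 2)
  have hT1 := (hdiv.mul hM).mul hφd
  have hT3 := (hrc.const_mul (γ * (1 - γ))).mul hn2
  have big := (hT1.add hn1h).add hT3
  have hfun : lyapCont γ s f xstar X V = (fun t : ℝ =>
      t ^ γ * (t ^ γ - 2 * γ * σ * t ^ (γ - 1)) / (t - 3 * γ * σ) *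
        (t + 3 * γ * σ / 2) * (f (X t + σ • V t) - f xstar) +
      1 / 2 * ‖(t ^ γ) • V t + (2 * γ * t ^ (γ - 1)) • (X t - xstar)‖ ^ 2 +
      γ * (1 - γ) * t ^ (2 * (γ - 1)) * ‖X t - xstar‖ ^ 2) := by
    funext t; simp only [lyapCont, hσdef]
  have e1 : x ^ γ = x ^ (γ - 1) * x := by
    rw [← Real.rpow_add_one hx0.ne' (γ - 1)]; ring_nf
  have e2 : x ^ (γ - 1 - 1) = x ^ (γ - 1) / x := Real.rpow_sub_one hx0.ne' (γ - 1)
  have e3 : x ^ (2 * (γ - 1)) = (x ^ (γ - 1)) ^ 2 := by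
    rw [show (2 : ℝ) * (γ - 1) = (γ - 1) + (γ - 1) by ring, Real.rpow_add hx0, sq]
  have e4 : x ^ (2 * (γ - 1) - 1) = (x ^ (γ - 1)) ^ 2 / x := by
    rw [Real.rpow_sub_one hx0.ne', e3]
  set a := x ^ (γ - 1) with ha
  have ha0 : 0 < a := Real.rpow_pos_of_pos hx0 _
  set g := f' (X x + σ • V x) with hg
  have hder : HasDerivAt (lyapCont γ s f xstar X V)
      ((2 * γ * a ^ 2 * (x + 3 * γ * σ / 2) -
          a ^ 2 * (γ * σ * ((5 / 2 - 2 * γ) * x ^ 2 + 3 * (γ - 2) * (γ * σ) * x +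
            9 * (γ + 1) * (γ * σ) ^ 2)) / (x - 3 * γ * σ) ^ 2) *
        (f (X x + σ • V x) - f xstar) -
      2 * γ * a ^ 2 * (x + 3 * γ * σ / 2) * (σ * ⟪g, V x⟫ + ⟪g, X x - xstar⟫) -
      σ * (1 + 3 * γ * σ / (2 * x)) *
        (a ^ 2 * x * (x - 2 * γ * σ) * (x + 3 * γ * σ / 2) / (x - 3 * γ * σ)) * ⟪g, g⟫ +
      2 * γ * (γ - 1) * (γ + 1) * a ^ 2 / x * ‖X x - xstar‖ ^ 2) x := by
    rw [hfun]
    convert big using 1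
    case e'_4 => rfl
    case e'_5 => rfl
    case e'_8 => rfl
    simp only [Pi.add_apply, Pi.smul_apply', Pi.mul_apply, Pi.sub_apply, Pi.div_apply, id, ← ha]
    simp only [inner_add_left, inner_add_right, real_inner_smul_left, real_inner_smul_right,
      inner_neg_left, inner_neg_right]
    simp only [real_inner_comm (V x) g, real_inner_comm (X x - xstar) g,
      real_inner_comm (X x - xstar) (V x), real_inner_self_eq_norm_sq]
    rw [e1, e2, e3, e4]
    generalize ⟪g, V x⟫ = p
    generalize ⟪g, X x - xstar⟫ = q
    generalize ⟪V x, X x - xstar⟫ = r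
    generalize hnn : ‖X x - xstar‖ ^ 2 = n
    generalize ‖V x‖ ^ 2 = vv
    generalize ‖g‖ ^ 2 = m
    generalize f (X x + σ • V x) - f xstar = φ
    have hD3 : x - γ * 3 * σ ≠ 0 := ne_of_gt (by linarith)
    field_simp
    ring
  refine ⟨_, hder, ?_⟩
  have hφ0 : 0 ≤ f (X x + σ • V x) - f xstar := sub_nonneg.2 (hmin _)
  have hcvx : f (X x + σ • V x) - f xstar ≤ σ * ⟪g, V x⟫ + ⟪g, X x - xstar⟫ := by
    have h := grad_convex_ineq hconv hgrad (X x + σ • V x) xstar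
    rw [← hg] at h
    have hrw : xstar - (X x + σ • V x) = -(X x - xstar + σ • V x) := by module
    rw [hrw, inner_neg_right, inner_add_right, real_inner_smul_right] at h
    linarith
  have hm0 : (0:ℝ) ≤ ⟪g, g⟫ := real_inner_self_nonneg
  have hn0 : (0:ℝ) ≤ ‖X x - xstar‖ ^ 2 := by positivity
  have hγ2 : 0 < 2 + 2 * γ - 3 * γ ^ 2 := by nlinarith
  have hQ : 0 ≤ (5 / 2 - 2 * γ) * x ^ 2 + 3 * (γ - 2) * (γ * σ) * x +
      9 * (γ + 1) * (γ * σ) ^ 2 := by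
    nlinarith [sq_nonneg ((5 - 4 * γ) * x + 3 * (γ - 2) * (γ * σ)),
      mul_nonneg hγ2.le (sq_nonneg (γ * σ)), (by linarith : (0:ℝ) < 5 - 4 * γ)]
  have hK0 : 0 < 2 * γ * a ^ 2 * (x + 3 * γ * σ / 2) := by positivity
  have hdAle : 2 * γ * a ^ 2 * (x + 3 * γ * σ / 2) -
      a ^ 2 * (γ * σ * ((5 / 2 - 2 * γ) * x ^ 2 + 3 * (γ - 2) * (γ * σ) * x +
        9 * (γ + 1) * (γ * σ) ^ 2)) / (x - 3 * γ * σ) ^ 2 ≤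
      2 * γ * a ^ 2 * (x + 3 * γ * σ / 2) := by
    have h0 : 0 ≤ a ^ 2 * (γ * σ * ((5 / 2 - 2 * γ) * x ^ 2 + 3 * (γ - 2) * (γ * σ) * x +
        9 * (γ + 1) * (γ * σ) ^ 2)) / (x - 3 * γ * σ) ^ 2 :=
      div_nonneg (mul_nonneg (sq_nonneg a) (mul_nonneg (by positivity) hQ)) (sq_nonneg _)
    linarith
  have ht1 := mul_le_mul_of_nonneg_right hdAle hφ0
  have ht2 := mul_le_mul_of_nonneg_left hcvx hK0.le
  have hx2 : 0 < x - 2 * γ * σ := by nlinarith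
  have hx3 : 0 < x - 3 * γ * σ := by linarith
  have ht3 : 0 ≤ σ * (1 + 3 * γ * σ / (2 * x)) *
      (a ^ 2 * x * (x - 2 * γ * σ) * (x + 3 * γ * σ / 2) / (x - 3 * γ * σ)) * ⟪g, g⟫ := by
    have hA : 0 ≤ a ^ 2 * x * (x - 2 * γ * σ) * (x + 3 * γ * σ / 2) / (x - 3 * γ * σ) := by
      positivity
    have hc : 0 ≤ σ * (1 + 3 * γ * σ / (2 * x)) := by positivity
    exact mul_nonneg (mul_nonneg hc hA) hm0
  have ht4 : 2 * γ * (γ - 1) * (γ + 1) * a ^ 2 / x * ‖X x - xstar‖ ^ 2 ≤ 0 := by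
    have hco : 2 * γ * (γ - 1) * (γ + 1) * a ^ 2 / x ≤ 0 := by
      rw [div_nonpos_iff]
      right
      constructor
      · nlinarith [sq_nonneg a, mul_pos (mul_pos hγ0 (by linarith : (0:ℝ) < γ + 1))
          (mul_pos ha0 ha0)]
      · exact hx0.le
    exact mul_nonpos_iff.2 (Or.inr ⟨hco, hn0⟩)
  linarith [ht1, ht2, ht3, ht4]

/-- For every γ ∈ (0,1) and every step size s > 0, there exists
t₀ > 3γ√s (depending only on γ and s) such that the solution X of the
high-resolution differential equation obeys, for all t ≥ t₀,
f(X(t) + √s Ẋ(t)) − f(x⋆) ≤ E(t₀) / (t^γ (t^γ − 2γ√s t^{γ−1})). -/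
theorem underdamped_continuous_objective_rate
    (γ s : ℝ) (hγ : γ ∈ Set.Ioo (0 : ℝ) 1) (hs : 0 < s) :
    ∃ t₀ : ℝ, 3 * γ * Real.sqrt s < t₀ ∧
      ∀ (d : ℕ) (L : ℝ) (f : EuclideanSpace ℝ (Fin d) → ℝ)
        (f' : EuclideanSpace ℝ (Fin d) → EuclideanSpace ℝ (Fin d))
        (xstar : EuclideanSpace ℝ (Fin d))
        (X V : ℝ → EuclideanSpace ℝ (Fin d)),
        0 < L →
        ConvexOn ℝ Set.univ f →
        (∀ z, HasGradientAt f (f' z) z) →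
        (∀ z w, ‖f' z - f' w‖ ≤ L * ‖z - w‖) →
        (∀ z, f xstar ≤ f z) →
        (∀ t ∈ Set.Ioi (0 : ℝ), HasDerivAt X (V t) t) →
        (∀ t ∈ Set.Ioi (0 : ℝ), HasDerivAt V
          (-((3 * γ / t) • V t +
              (1 + 3 * γ * Real.sqrt s / (2 * t)) • f' (X t + Real.sqrt s • V t))) t) →
        ∀ t : ℝ, t₀ ≤ t →
          f (X t + Real.sqrt s • V t) - f xstar ≤
            lyapCont γ s f xstar X V t₀ /
              (t ^ γ * (t ^ γ - 2 * γ * Real.sqrt s * t ^ (γ - 1))) := by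
  obtain ⟨hγ0, hγ1⟩ := hγ
  set σ := Real.sqrt s with hσ
  have hσ0 : 0 < σ := Real.sqrt_pos.2 hs
  have hb : 0 < 3 * γ * σ := by positivity
  refine ⟨3 * γ * σ + 1, by linarith, ?_⟩
  intro d L f f' xstar X V hL hconv hgrad hlip hmin hX hV t ht
  have hD : ∀ y ∈ Set.Ici (3 * γ * σ + 1),
      ∃ v, HasDerivAt (lyapCont γ s f xstar X V) v y ∧ v ≤ 0 := fun y hy =>
    deriv_step γ s σ hγ0 hγ1 hσ0 hσ.symm f f' xstar X V hconv hgrad hmin hX hV y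
      (by simp only [Set.mem_Ici] at hy; linarith)
  have hanti : AntitoneOn (lyapCont γ s f xstar X V) (Set.Ici (3 * γ * σ + 1)) := by
    apply antitoneOn_of_deriv_nonpos (convex_Ici _)
    · exact fun y hy => ((hD y hy).choose_spec.1).continuousAt.continuousWithinAt
    · intro y hy
      rw [interior_Ici] at hy
      exact ((hD y (Set.mem_Ici.2 (le_of_lt hy))).choose_spec.1).differentiableAt.differentiableWithinAt
    · intro y hy
      rw [interior_Ici] at hy
      obtain ⟨v, hv, hv0⟩ := hD y (Set.mem_Ici.2 (le_of_lt hy))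
      rw [hv.deriv]; exact hv0
  have hEt : lyapCont γ s f xstar X V t ≤ lyapCont γ s f xstar X V (3 * γ * σ + 1) :=
    hanti (Set.mem_Ici.2 le_rfl) (Set.mem_Ici.2 ht) ht
  have ht0 : 0 < t := by linarith
  have hφ0 : 0 ≤ f (X t + σ • V t) - f xstar := sub_nonneg.2 (hmin _)
  have e1 : t ^ γ = t ^ (γ - 1) * t := by
    rw [← Real.rpow_add_one ht0.ne' (γ - 1)]; ring_nf
  have ha0 : 0 < t ^ (γ - 1) := Real.rpow_pos_of_pos ht0 _
  have hP0 : 0 < t ^ γ * (t ^ γ - 2 * γ * σ * t ^ (γ - 1)) := by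
    rw [e1]
    have h2 : 0 < t - 2 * γ * σ := by nlinarith
    nlinarith [mul_pos (mul_pos ha0 ht0) (mul_pos ha0 h2)]
  have hcoef : t ^ γ * (t ^ γ - 2 * γ * σ * t ^ (γ - 1)) ≤
      t ^ γ * (t ^ γ - 2 * γ * σ * t ^ (γ - 1)) / (t - 3 * γ * σ) * (t + 3 * γ * σ / 2) := by
    rw [div_mul_eq_mul_div, le_div_iff₀ (by linarith : (0:ℝ) < t - 3 * γ * σ)]
    nlinarith [hP0]
  have hlow : t ^ γ * (t ^ γ - 2 * γ * σ * t ^ (γ - 1)) * (f (X t + σ • V t) - f xstar) ≤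
      lyapCont γ s f xstar X V t := by
    have hmul := mul_le_mul_of_nonneg_right hcoef hφ0
    have h2 : (0:ℝ) ≤ 1 / 2 * ‖(t ^ γ) • V t + (2 * γ * t ^ (γ - 1)) • (X t - xstar)‖ ^ 2 := by
      positivity
    have h3 : (0:ℝ) ≤ γ * (1 - γ) * t ^ (2 * (γ - 1)) * ‖X t - xstar‖ ^ 2 := by
      have : (0:ℝ) ≤ γ * (1 - γ) := by nlinarith
      positivity
    simp only [lyapCont, ← hσ]
    linarith
  rw [le_div_iff₀ hP0]
  nlinarith [le_trans hlow hEt]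
end

section
/- For every γ ∈ (0,1) there exists an integer K₂ (depending only on γ) such that for all integers k ≥ K₂, (k+1)^γ + 2γ(k+2)^{γ−1} ≤ k^{γ−1}(k + 3γ); equivalently, the coefficient A_k = (k/(k+3γ))² · { ((k+1)^γ + 2γ(k+2)^{γ−1})² − k^{2(γ−1)}(k+3γ)² } is ≤ 0 for all k ≥ K₂. -/
open Set Filter Topology

/-- For every γ ∈ (0,1) there exists an integer K₂ (depending only
on γ) such that for all integers k ≥ K₂,
(k+1)^γ + 2γ(k+2)^{γ−1} ≤ k^{γ−1}(k + 3γ); equivalently, the coefficient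
A_k = (k/(k+3γ))² · { ((k+1)^γ + 2γ(k+2)^{γ−1})² − k^{2(γ−1)}(k+3γ)² } is ≤ 0. -/
theorem coeff_A_eventually_nonpositive
    (γ : ℝ) (hγ : γ ∈ Set.Ioo (0 : ℝ) 1) :
    ∃ K₂ : ℕ, ∀ k : ℕ, K₂ ≤ k →
      (((k : ℝ) + 1) ^ γ + 2 * γ * ((k : ℝ) + 2) ^ (γ - 1) ≤
          (k : ℝ) ^ (γ - 1) * ((k : ℝ) + 3 * γ)) ∧
      ((k : ℝ) / ((k : ℝ) + 3 * γ)) ^ 2 *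
          ((((k : ℝ) + 1) ^ γ + 2 * γ * ((k : ℝ) + 2) ^ (γ - 1)) ^ 2 -
            (k : ℝ) ^ (2 * (γ - 1)) * ((k : ℝ) + 3 * γ) ^ 2) ≤ 0 := by
  obtain ⟨hγ0, hγ1⟩ := hγ
  refine ⟨1, fun k hk => ?_⟩
  have hk1 : (1 : ℝ) ≤ (k : ℝ) := by exact_mod_cast hk
  have hkpos : (0 : ℝ) < k := lt_of_lt_of_le one_pos hk1
  -- step 1: (k+1)^γ ≤ k^γ + γ k^(γ-1)
  have h1 : ((k : ℝ) + 1) ^ γ ≤ (k : ℝ) ^ γ + γ * (k : ℝ) ^ (γ - 1) := by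
    have hinv : (0 : ℝ) < 1 / (k : ℝ) := by positivity
    have key : (1 + 1 / (k : ℝ)) ^ γ ≤ 1 + γ * (1 / (k : ℝ)) :=
      rpow_one_add_le_one_add_mul_self (by linarith) hγ0.le hγ1.le
    have hfact : (k : ℝ) + 1 = (k : ℝ) * (1 + 1 / (k : ℝ)) := by
      field_simp
    calc ((k : ℝ) + 1) ^ γ = ((k : ℝ) * (1 + 1 / (k : ℝ))) ^ γ := by rw [← hfact]
      _ = (k : ℝ) ^ γ * (1 + 1 / (k : ℝ)) ^ γ :=
          Real.mul_rpow hkpos.le (by positivity)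
      _ ≤ (k : ℝ) ^ γ * (1 + γ * (1 / (k : ℝ))) := by
          exact mul_le_mul_of_nonneg_left key (Real.rpow_nonneg hkpos.le γ)
      _ = (k : ℝ) ^ γ + γ * ((k : ℝ) ^ γ / (k : ℝ)) := by ring
      _ = (k : ℝ) ^ γ + γ * (k : ℝ) ^ (γ - 1) := by
          rw [Real.rpow_sub hkpos, Real.rpow_one]
  -- step 2: (k+2)^(γ-1) ≤ k^(γ-1)
  have h2 : ((k : ℝ) + 2) ^ (γ - 1) ≤ (k : ℝ) ^ (γ - 1) :=
    Real.rpow_le_rpow_of_nonpos hkpos (by linarith) (by linarith)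
  have hmain : ((k : ℝ) + 1) ^ γ + 2 * γ * ((k : ℝ) + 2) ^ (γ - 1) ≤
      (k : ℝ) ^ (γ - 1) * ((k : ℝ) + 3 * γ) := by
    have hkg : (k : ℝ) ^ (γ - 1) * (k : ℝ) = (k : ℝ) ^ γ := by
      nth_rewrite 2 [← Real.rpow_one (k : ℝ)]
      rw [← Real.rpow_add hkpos]; ring_nf
    have h2' : 2 * γ * ((k : ℝ) + 2) ^ (γ - 1) ≤ 2 * γ * (k : ℝ) ^ (γ - 1) := by
      apply mul_le_mul_of_nonneg_left h2; linarith
    have : (k : ℝ) ^ (γ - 1) * ((k : ℝ) + 3 * γ) =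
        (k : ℝ) ^ γ + γ * (k : ℝ) ^ (γ - 1) + 2 * γ * (k : ℝ) ^ (γ - 1) := by
      rw [mul_add, hkg]; ring
    rw [this]; linarith
  refine ⟨hmain, ?_⟩
  apply mul_nonpos_of_nonneg_of_nonpos (by positivity)
  have hLnn : 0 ≤ ((k : ℝ) + 1) ^ γ + 2 * γ * ((k : ℝ) + 2) ^ (γ - 1) := by
    have := Real.rpow_nonneg (by linarith : (0:ℝ) ≤ (k:ℝ)+1) γ
    have := Real.rpow_nonneg (by linarith : (0:ℝ) ≤ (k:ℝ)+2) (γ-1)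
    nlinarith
  have hsq : (((k : ℝ) + 1) ^ γ + 2 * γ * ((k : ℝ) + 2) ^ (γ - 1)) ^ 2 ≤
      ((k : ℝ) ^ (γ - 1) * ((k : ℝ) + 3 * γ)) ^ 2 := by
    apply pow_le_pow_left₀ hLnn hmain
  have hexp : (k : ℝ) ^ (2 * (γ - 1)) = ((k : ℝ) ^ (γ - 1)) ^ 2 := by
    rw [← Real.rpow_natCast ((k:ℝ)^(γ-1)) 2, ← Real.rpow_mul hkpos.le]
    norm_num; ring_nf
  rw [hexp]
  nlinarith [hsq]
end

section
/- For every γ ∈ (0,1), the sequence k ↦ k^γ (k^γ + 2γ(k+1)^{γ−1}) is strictly increasing in k over the positive integers; equivalently, the coefficient G_k = −2k^γ(k^γ + 2γ(k+1)^{γ−1}) is negative and strictly decreasing in k. -/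
open Set Filter Topology

private lemma key_ineq (γ : ℝ) (hγ : γ ∈ Set.Ioo (0 : ℝ) 1) (x : ℝ) (hx : 1 ≤ x) :
    x ^ γ * (x ^ γ + 2 * γ * (x + 1) ^ (γ - 1)) ≤ (x + 1) ^ γ * (x + 1) ^ γ := by
  obtain ⟨hγ0, hγ1⟩ := hγ
  have hx0 : (0:ℝ) < x := lt_of_lt_of_le one_pos hx
  have hx1 : (0:ℝ) < x + 1 := by linarith
  set a := x ^ γ with ha
  set b := (x + 1) ^ γ with hb
  have ha0 : 0 < a := Real.rpow_pos_of_pos hx0 γ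
  have hb0 : 0 < b := Real.rpow_pos_of_pos hx1 γ
  have hab : a ≤ b := Real.rpow_le_rpow hx0.le (by linarith) hγ0.le
  have hc : (x + 1) ^ (γ - 1) = b / (x + 1) := by
    rw [Real.rpow_sub hx1, Real.rpow_one]
  have hx2g : x ^ (2 * γ) = a * a := by
    rw [two_mul, Real.rpow_add hx0]
  have hb2g : (x + 1) ^ (2 * γ) = b * b := by
    rw [two_mul, Real.rpow_add hx1]
  rcases le_or_gt γ (1/2) with hhalf | hhalf
  · -- Bernoulli: (x/(x+1))^(2γ) ≤ 1 - 2γ/(x+1)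
    have hs : -1 ≤ -(1/(x+1)) := by
      rw [neg_le_neg_iff]
      rw [div_le_one hx1]; linarith
    have hber := rpow_one_add_le_one_add_mul_self hs (by linarith : (0:ℝ) ≤ 2*γ)
      (by linarith : 2*γ ≤ 1)
    have h1s : 1 + -(1/(x+1)) = x / (x+1) := by field_simp; ring
    rw [h1s] at hber
    have hdiv : (x / (x+1)) ^ (2*γ) = x ^ (2*γ) / (x+1) ^ (2*γ) :=
      Real.div_rpow hx0.le hx1.le (2*γ)
    rw [hdiv, hx2g, hb2g] at hber
    have hber' : a * a ≤ b * b * (1 + 2*γ * -(1/(x+1))) := by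
      rw [div_le_iff₀ (by positivity : (0:ℝ) < b * b)] at hber
      linarith [hber]
    have hexp : 1 + 2*γ * -(1/(x+1)) = 1 - 2*γ/(x+1) := by ring
    rw [hexp] at hber'
    rw [hc]
    have h2 : a * (2 * γ * (b / (x+1))) ≤ 2*γ*(b*b)/(x+1) := by
      rw [show a * (2 * γ * (b / (x+1))) = 2*γ*(a*b)/(x+1) by ring]
      have habb : a * b ≤ b * b := by nlinarith
      apply div_le_div_of_nonneg_right ?_ hx1.le |>.trans_eq rfl
      nlinarith
    have h3 : b * b * (1 - 2*γ/(x+1)) = b*b - 2*γ*(b*b)/(x+1) := by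
      field_simp
    have h4 : a * (a + 2 * γ * (x+1) ^ (γ-1)) = a*a + a * (2 * γ * (x+1) ^ (γ-1)) := by ring
    linarith [hber', h2, h3, h4]
  · -- Bernoulli: (1+1/x)^(2γ) ≥ 1 + 2γ/x
    have hs : -1 ≤ (1/x : ℝ) := by
      have : (0:ℝ) ≤ 1/x := by positivity
      linarith
    have hber := one_add_mul_self_le_rpow_one_add hs (by linarith : (1:ℝ) ≤ 2*γ)
    have h1s : (1 + 1/x) = (x+1)/x := by field_simp
    rw [h1s] at hber
    have hdiv : ((x+1) / x) ^ (2*γ) = (x+1) ^ (2*γ) / x ^ (2*γ) :=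
      Real.div_rpow hx1.le hx0.le (2*γ)
    rw [hdiv, hx2g, hb2g] at hber
    have hber' : a * a * (1 + 2*γ*(1/x)) ≤ b * b := by
      rw [le_div_iff₀ (by positivity : (0:ℝ) < a * a)] at hber
      linarith [hber]
    have hcx : (x + 1) ^ (γ - 1) ≤ x ^ (γ - 1) :=
      Real.rpow_le_rpow_of_nonpos hx0 (by linarith) (by linarith)
    have hxc : x ^ (γ - 1) = a / x := by
      rw [Real.rpow_sub hx0, Real.rpow_one]
    have h2 : a * (2 * γ * (x+1) ^ (γ-1)) ≤ a * (2 * γ * (a/x)) := by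
      apply mul_le_mul_of_nonneg_left _ ha0.le
      apply mul_le_mul_of_nonneg_left _ (by linarith)
      rw [← hxc]; exact hcx
    have h3 : a * a * (1 + 2*γ*(1/x)) = a*a + a*(2*γ*(a/x)) := by
      field_simp
    have h4 : a * (a + 2 * γ * (x+1) ^ (γ-1)) = a*a + a * (2 * γ * (x+1) ^ (γ-1)) := by ring
    linarith [hber', h2, h3, h4]

/-- For every γ ∈ (0,1), the sequence k ↦ k^γ (k^γ + 2γ(k+1)^{γ−1})
is strictly increasing in k over the positive integers; equivalently, the
coefficient G_k = −2k^γ(k^γ + 2γ(k+1)^{γ−1}) is negative and strictly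
decreasing in k. -/
theorem coeff_G_monotone
    (γ : ℝ) (hγ : γ ∈ Set.Ioo (0 : ℝ) 1) :
    (∀ k : ℕ, 1 ≤ k →
      (k : ℝ) ^ γ * ((k : ℝ) ^ γ + 2 * γ * ((k : ℝ) + 1) ^ (γ - 1)) <
        ((k : ℝ) + 1) ^ γ * (((k : ℝ) + 1) ^ γ + 2 * γ * ((k : ℝ) + 2) ^ (γ - 1))) ∧
    (∀ k : ℕ, 1 ≤ k →
      -2 * (k : ℝ) ^ γ * ((k : ℝ) ^ γ + 2 * γ * ((k : ℝ) + 1) ^ (γ - 1)) < 0) ∧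
    (∀ k : ℕ, 1 ≤ k →
      -2 * ((k : ℝ) + 1) ^ γ * (((k : ℝ) + 1) ^ γ + 2 * γ * ((k : ℝ) + 2) ^ (γ - 1)) <
        -2 * (k : ℝ) ^ γ * ((k : ℝ) ^ γ + 2 * γ * ((k : ℝ) + 1) ^ (γ - 1))) := by
  obtain ⟨hγ0, hγ1⟩ := hγ
  have main : ∀ k : ℕ, 1 ≤ k →
      (k : ℝ) ^ γ * ((k : ℝ) ^ γ + 2 * γ * ((k : ℝ) + 1) ^ (γ - 1)) <
        ((k : ℝ) + 1) ^ γ * (((k : ℝ) + 1) ^ γ + 2 * γ * ((k : ℝ) + 2) ^ (γ - 1)) := by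
    intro k hk
    have hk1 : (1:ℝ) ≤ (k:ℝ) := by exact_mod_cast hk
    have h1 := key_ineq γ ⟨hγ0, hγ1⟩ (k:ℝ) hk1
    have hb0 : 0 < ((k:ℝ) + 1) ^ γ := Real.rpow_pos_of_pos (by linarith) γ
    have hd0 : 0 < ((k:ℝ) + 2) ^ (γ - 1) := Real.rpow_pos_of_pos (by linarith) _
    calc (k : ℝ) ^ γ * ((k : ℝ) ^ γ + 2 * γ * ((k : ℝ) + 1) ^ (γ - 1))
        ≤ ((k:ℝ) + 1) ^ γ * ((k:ℝ) + 1) ^ γ := h1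
      _ < ((k : ℝ) + 1) ^ γ * (((k : ℝ) + 1) ^ γ + 2 * γ * ((k : ℝ) + 2) ^ (γ - 1)) := by
          nlinarith [mul_pos (mul_pos (mul_pos two_pos hγ0) hb0) hd0]
  refine ⟨main, ?_, ?_⟩
  · intro k hk
    have hk1 : (1:ℝ) ≤ (k:ℝ) := by exact_mod_cast hk
    have ha0 : 0 < (k:ℝ) ^ γ := Real.rpow_pos_of_pos (by linarith) γ
    have hc0 : 0 < ((k:ℝ) + 1) ^ (γ - 1) := Real.rpow_pos_of_pos (by linarith) _
    nlinarith [mul_pos ha0 (by nlinarith [mul_pos (mul_pos two_pos hγ0) hc0] : (0:ℝ) < (k:ℝ) ^ γ + 2 * γ * ((k:ℝ) + 1) ^ (γ - 1))]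
  · intro k hk
    have := main k hk
    nlinarith [this]
end

section
/- For every step size s > 0, any solution X of the critical high-resolution differential equation Ẍ(t) + ∇f(X(t) + √s Ẋ(t)) = 0 obeys lim_{t→∞} t · inf_{t₀ ≤ u ≤ t} ‖∇f(X(u) + √s Ẋ(u))‖² = 0 for every fixed t₀ > 0, and the objective value is bounded: f(X(t) + √s Ẋ(t)) − f(x⋆) ≤ f(X(t₀) + √s Ẋ(t₀)) − f(x⋆) + (1/2)‖Ẋ(t₀)‖² for all t ≥ t₀. -/
open Set Filter Topology

/-- For every step size s > 0, any solution X of the critical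
high-resolution differential equation Ẍ(t) + ∇f(X(t) + √s Ẋ(t)) = 0 obeys
lim_{t→∞} t · inf_{t₀ ≤ u ≤ t} ‖∇f(X(u) + √s Ẋ(u))‖² = 0 for every fixed
t₀ > 0, and the objective value is bounded:
f(X(t) + √s Ẋ(t)) − f(x⋆) ≤ f(X(t₀) + √s Ẋ(t₀)) − f(x⋆) + (1/2)‖Ẋ(t₀)‖²
for all t ≥ t₀. -/
theorem critical_continuous_convergence
    (s L : ℝ) (hs : 0 < s) (hL : 0 < L)
    {d : ℕ} (f : EuclideanSpace ℝ (Fin d) → ℝ)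
    (f' : EuclideanSpace ℝ (Fin d) → EuclideanSpace ℝ (Fin d))
    (xstar : EuclideanSpace ℝ (Fin d))
    (X V : ℝ → EuclideanSpace ℝ (Fin d))
    (hconv : ConvexOn ℝ Set.univ f)
    (hgrad : ∀ z, HasGradientAt f (f' z) z)
    (hlip : ∀ z w, ‖f' z - f' w‖ ≤ L * ‖z - w‖)
    (hmin : ∀ z, f xstar ≤ f z)
    (hX : ∀ t ∈ Set.Ioi (0 : ℝ), HasDerivAt X (V t) t)
    (hV : ∀ t ∈ Set.Ioi (0 : ℝ),
      HasDerivAt V (-(f' (X t + Real.sqrt s • V t))) t) :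
    (∀ t₀ : ℝ, 0 < t₀ →
      Filter.Tendsto
        (fun t : ℝ => t *
          sInf ((fun u : ℝ => ‖f' (X u + Real.sqrt s • V u)‖ ^ 2) '' Set.Icc t₀ t))
        Filter.atTop (nhds 0)) ∧
    (∀ t₀ : ℝ, 0 < t₀ → ∀ t : ℝ, t₀ ≤ t →
      f (X t + Real.sqrt s • V t) - f xstar ≤
        f (X t₀ + Real.sqrt s • V t₀) - f xstar + (1 / 2) * ‖V t₀‖ ^ 2) := by
  classical
  have hss : (0:ℝ) < Real.sqrt s := Real.sqrt_pos.2 hs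
  set y : ℝ → EuclideanSpace ℝ (Fin d) := fun t => X t + Real.sqrt s • V t with hy_def
  set g : ℝ → ℝ := fun u : ℝ => ‖f' (X u + Real.sqrt s • V u)‖ ^ 2 with hg_def
  set E : ℝ → ℝ := fun t => f (y t) - f xstar + (1/2) * ‖V t‖ ^ 2 with hE_def
  have hgy : ∀ u : ℝ, g u = ‖f' (y u)‖ ^ 2 := fun u => rfl
  -- derivative of y
  have hy' : ∀ t ∈ Set.Ioi (0:ℝ), HasDerivAt y (V t - Real.sqrt s • f' (y t)) t := by
    intro t ht
    have := (hX t ht).add ((hV t ht).const_smul (Real.sqrt s))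
    rw [show y = X + Real.sqrt s • V from rfl]
    simpa [smul_neg, sub_eq_add_neg] using this
  -- derivative of E
  have hE' : ∀ t ∈ Set.Ioi (0:ℝ), HasDerivAt E (-(Real.sqrt s * g t)) t := by
    intro t ht
    have h1 : HasDerivAt (fun t => f (y t))
        ((inner ℝ (f' (y t)) (V t - Real.sqrt s • f' (y t)) : ℝ)) t := by
      have := (hgrad (y t)).hasFDerivAt.comp_hasDerivAt t (hy' t ht)
      simpa [Function.comp_def] using this
    have h2 : HasDerivAt (fun t => (inner ℝ (V t) (V t) : ℝ))
        ((inner ℝ (V t) (-(f' (y t))) : ℝ) + (inner ℝ (-(f' (y t))) (V t) : ℝ)) t :=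
      HasDerivAt.inner ℝ (hV t ht) (hV t ht)
    have h3 := (h1.sub_const (f xstar)).add (h2.const_mul (1/2 : ℝ))
    have hEeq : E = fun t => f (y t) - f xstar + (1/2) * (inner ℝ (V t) (V t) : ℝ) := by
      funext u
      simp only [hE_def]
      rw [real_inner_self_eq_norm_sq]
    rw [hEeq]
    refine h3.congr_deriv ?_
    have hc : (inner ℝ (V t) (f' (y t)) : ℝ) = (inner ℝ (f' (y t)) (V t) : ℝ) :=
      real_inner_comm _ _
    simp only [inner_sub_right, real_inner_smul_right, inner_neg_right, inner_neg_left,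
      real_inner_self_eq_norm_sq, hgy, hc]
    ring
  -- E is nonnegative
  have hE_nonneg : ∀ u : ℝ, 0 ≤ E u := by
    intro u
    have h1 : 0 ≤ f (y u) - f xstar := sub_nonneg.2 (hmin _)
    have h2 : 0 ≤ (1/2 : ℝ) * ‖V u‖ ^ 2 := by positivity
    simp only [hE_def]; linarith
  -- E is antitone on Ici t₀ for t₀ > 0
  have hE_anti : ∀ t₀ : ℝ, 0 < t₀ → AntitoneOn E (Set.Ici t₀) := by
    intro t₀ ht₀
    apply antitoneOn_of_deriv_nonpos (convex_Ici t₀)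
    · intro u hu
      exact (hE' u (Set.mem_Ioi.2 (lt_of_lt_of_le ht₀ hu))).continuousAt.continuousWithinAt
    · intro u hu
      rw [interior_Ici] at hu
      exact (hE' u (Set.mem_Ioi.2 (ht₀.trans hu))).differentiableAt.differentiableWithinAt
    · intro u hu
      rw [interior_Ici] at hu
      rw [(hE' u (Set.mem_Ioi.2 (ht₀.trans hu))).deriv]
      have hg0 : 0 ≤ g u := by rw [hgy]; positivity
      nlinarith
  constructor
  · -- Part 1
    intro t₀ ht₀
    set m : ℝ → ℝ := fun t => sInf (g '' Set.Icc t₀ t) with hm_def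
    have hbdd : ∀ t : ℝ, BddBelow (g '' Set.Icc t₀ t) := by
      intro t
      refine ⟨0, ?_⟩
      rintro x ⟨u, _, rfl⟩
      rw [hgy]; positivity
    have hm0 : ∀ t : ℝ, 0 ≤ m t := by
      intro t
      apply Real.sInf_nonneg
      rintro x ⟨u, _, rfl⟩
      rw [hgy]; positivity
    have hm_le : ∀ t : ℝ, ∀ u ∈ Set.Icc t₀ t, m t ≤ g u := by
      intro t u hu
      exact csInf_le (hbdd t) (Set.mem_image_of_mem _ hu)
    -- key estimate
    have key : ∀ t : ℝ, 2 * t₀ ≤ t →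
        Real.sqrt s * m t * (t/2) ≤ E (t/2) - E t := by
      intro t ht
      have ht2 : t₀ ≤ t / 2 := by linarith
      have hanti : AntitoneOn (fun u => E u + Real.sqrt s * m t * u) (Set.Icc (t/2) t) := by
        apply antitoneOn_of_deriv_nonpos (convex_Icc _ _)
        · intro u hu
          have hu0 : 0 < u := lt_of_lt_of_le ht₀ (ht2.trans hu.1)
          have hid : HasDerivAt (fun v : ℝ => Real.sqrt s * m t * v) (Real.sqrt s * m t) u := by
            simpa using HasDerivAt.const_mul (Real.sqrt s * m t) (hasDerivAt_id u)
          exact ((hE' u hu0).add hid).continuousAt.continuousWithinAt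
        · intro u hu
          rw [interior_Icc] at hu
          have hu0 : 0 < u := lt_of_lt_of_le ht₀ (ht2.trans hu.1.le)
          have hid : HasDerivAt (fun v : ℝ => Real.sqrt s * m t * v) (Real.sqrt s * m t) u := by
            simpa using HasDerivAt.const_mul (Real.sqrt s * m t) (hasDerivAt_id u)
          exact ((hE' u hu0).add hid).differentiableAt.differentiableWithinAt
        · intro u hu
          rw [interior_Icc] at hu
          have hu0 : 0 < u := lt_of_lt_of_le ht₀ (ht2.trans hu.1.le)
          have hid : HasDerivAt (fun v : ℝ => Real.sqrt s * m t * v) (Real.sqrt s * m t) u := by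
            simpa using HasDerivAt.const_mul (Real.sqrt s * m t) (hasDerivAt_id u)
          have hd : HasDerivAt (fun u => E u + Real.sqrt s * m t * u)
              (-(Real.sqrt s * g u) + Real.sqrt s * m t) u :=
            (hE' u hu0).add hid
          rw [hd.deriv]
          have hmu : m t ≤ g u := hm_le t u ⟨ht2.trans hu.1.le, hu.2.le⟩
          nlinarith
      have h12 : t / 2 ∈ Set.Icc (t/2) t := ⟨le_rfl, by linarith⟩
      have h22 : t ∈ Set.Icc (t/2) t := ⟨by linarith, le_rfl⟩
      have h5 : E t + Real.sqrt s * m t * t ≤ E (t/2) + Real.sqrt s * m t * (t/2) := by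
        simpa using hanti h12 h22 (by linarith)
      have hring : Real.sqrt s * m t * t = 2 * (Real.sqrt s * m t * (t/2)) := by ring
      linarith
    -- limit of E at infinity
    have hEM : Antitone (fun t => E (max t t₀)) := by
      intro a b hab
      exact hE_anti t₀ ht₀ (Set.mem_Ici.2 (le_max_right a t₀))
        (Set.mem_Ici.2 (le_max_right b t₀)) (max_le_max hab le_rfl)
    have hEMb : BddBelow (Set.range fun t => E (max t t₀)) := by
      refine ⟨0, ?_⟩
      rintro x ⟨t, rfl⟩
      exact hE_nonneg _
    have hlim := tendsto_atTop_ciInf hEM hEMb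
    set ℓ : ℝ := ⨅ t : ℝ, E (max t t₀) with hl_def
    have heq : (fun t => E (max t t₀)) =ᶠ[atTop] E :=
      eventually_atTop.2 ⟨t₀, fun t ht => by simp only []; rw [max_eq_left ht]⟩
    have hElim : Tendsto E atTop (𝓝 ℓ) := hlim.congr' heq
    have hhalf : Tendsto (fun t : ℝ => E (t/2)) atTop (𝓝 ℓ) :=
      hElim.comp (tendsto_id.atTop_div_const (by norm_num : (0:ℝ) < 2))
    have hdiff : Tendsto (fun t : ℝ => (2 / Real.sqrt s) * (E (t/2) - E t)) atTop (𝓝 0) := by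
      have h := (hhalf.sub hElim).const_mul (2 / Real.sqrt s)
      simpa using h
    apply squeeze_zero' (g := fun t : ℝ => (2 / Real.sqrt s) * (E (t/2) - E t))
    · filter_upwards [eventually_ge_atTop (0:ℝ)] with t ht
      exact mul_nonneg ht (hm0 t)
    · filter_upwards [eventually_ge_atTop (2 * t₀)] with t ht
      have h := key t ht
      have hne : Real.sqrt s ≠ 0 := ne_of_gt hss
      have hrw : t * m t = (2 / Real.sqrt s) * (Real.sqrt s * m t * (t/2)) := by
        field_simp
      show t * m t ≤ (2 / Real.sqrt s) * (E (t/2) - E t)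
      rw [hrw]
      exact mul_le_mul_of_nonneg_left h (by positivity)
    · exact hdiff
  · -- Part 2
    intro t₀ ht₀ t ht
    have h1 : E t ≤ E t₀ :=
      hE_anti t₀ ht₀ (Set.mem_Ici.2 le_rfl) (Set.mem_Ici.2 ht) ht
    have h2 : 0 ≤ (1/2 : ℝ) * ‖V t‖ ^ 2 := by positivity
    simp only [hE_def] at h1
    linarith
end

section
/- For every step size s > 0, along any solution X of the critical high-resolution differential equation Ẍ(t) + ∇f(X(t) + √s Ẋ(t)) = 0, the Lyapunov function E(t) = f(X(t) + √s Ẋ(t)) − f(x⋆) + (1/2)‖Ẋ(t)‖² satisfies the exact identity dE(t)/dt = − √s ‖∇f(X(t) + √s Ẋ(t))‖² for all t > 0; in particular E is nonincreasing. -/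
open Set Filter Topology

/-- For every step size s > 0, along any solution X of the
critical high-resolution differential equation Ẍ(t) + ∇f(X(t) + √s Ẋ(t)) = 0,
the Lyapunov function E(t) = f(X(t) + √s Ẋ(t)) − f(x⋆) + (1/2)‖Ẋ(t)‖²
satisfies dE(t)/dt = − √s ‖∇f(X(t) + √s Ẋ(t))‖² for all t > 0; in particular
E is nonincreasing. -/
theorem critical_continuous_lyapunov_identity
    (s L : ℝ) (hs : 0 < s) (hL : 0 < L)
    {d : ℕ} (f : EuclideanSpace ℝ (Fin d) → ℝ)
    (f' : EuclideanSpace ℝ (Fin d) → EuclideanSpace ℝ (Fin d))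
    (xstar : EuclideanSpace ℝ (Fin d))
    (X V : ℝ → EuclideanSpace ℝ (Fin d))
    (hconv : ConvexOn ℝ Set.univ f)
    (hgrad : ∀ z, HasGradientAt f (f' z) z)
    (hlip : ∀ z w, ‖f' z - f' w‖ ≤ L * ‖z - w‖)
    (hmin : ∀ z, f xstar ≤ f z)
    (hX : ∀ t ∈ Set.Ioi (0 : ℝ), HasDerivAt X (V t) t)
    (hV : ∀ t ∈ Set.Ioi (0 : ℝ),
      HasDerivAt V (-(f' (X t + Real.sqrt s • V t))) t) :
    (∀ t ∈ Set.Ioi (0 : ℝ),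
      HasDerivAt
        (fun u : ℝ => f (X u + Real.sqrt s • V u) - f xstar + (1 / 2) * ‖V u‖ ^ 2)
        (-Real.sqrt s * ‖f' (X t + Real.sqrt s • V t)‖ ^ 2) t) ∧
    AntitoneOn
      (fun u : ℝ => f (X u + Real.sqrt s • V u) - f xstar + (1 / 2) * ‖V u‖ ^ 2)
      (Set.Ioi 0) := by
  have key : ∀ t ∈ Set.Ioi (0 : ℝ),
      HasDerivAt
        (fun u : ℝ => f (X u + Real.sqrt s • V u) - f xstar + (1 / 2) * ‖V u‖ ^ 2)
        (-Real.sqrt s * ‖f' (X t + Real.sqrt s • V t)‖ ^ 2) t := by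
    intro t ht
    set g := f' (X t + Real.sqrt s • V t) with hg
    have hYd : HasDerivAt (fun u => X u + Real.sqrt s • V u)
        (V t + Real.sqrt s • (-g)) t :=
      (hX t ht).add ((hV t ht).const_smul (Real.sqrt s))
    have hf1 : HasDerivAt (fun u => f (X u + Real.sqrt s • V u))
        ((inner ℝ g (V t + Real.sqrt s • (-g)) : ℝ)) t := by
      have := (hgrad (X t + Real.sqrt s • V t)).hasFDerivAt.comp_hasDerivAt t hYd
      exact this.congr_deriv (by simp [hg])
    have hn : HasDerivAt (fun u => (inner ℝ (V u) (V u) : ℝ))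
        ((inner ℝ (V t) (-g) : ℝ) + (inner ℝ (-g) (V t) : ℝ)) t :=
      (hV t ht).inner ℝ (hV t ht)
    have hn2 : HasDerivAt (fun u : ℝ => (1 / 2) * ‖V u‖ ^ 2)
        ((inner ℝ (-g) (V t) : ℝ)) t := by
      have : HasDerivAt (fun u : ℝ => (1 / 2) * (inner ℝ (V u) (V u) : ℝ))
          ((1 / 2) * ((inner ℝ (V t) (-g) : ℝ) + (inner ℝ (-g) (V t) : ℝ))) t :=
        hn.const_mul _
      have heq : (fun u : ℝ => (1 / 2) * (inner ℝ (V u) (V u) : ℝ))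
          = fun u : ℝ => (1 / 2) * ‖V u‖ ^ 2 := by
        funext u; rw [real_inner_self_eq_norm_sq]
      rw [heq] at this
      convert this using 1
      rw [real_inner_comm (V t) (-g)]
      ring
    have := (hf1.sub_const (f xstar)).add hn2
    refine this.congr_deriv ?_
    rw [inner_add_right, inner_smul_right, inner_neg_right, inner_neg_left,
      real_inner_self_eq_norm_sq]
    ring
  refine ⟨key, ?_⟩
  apply antitoneOn_of_deriv_nonpos (convex_Ioi 0)
  · exact fun x hx => ((key x hx).continuousAt.continuousWithinAt)
  · intro x hx
    rw [interior_Ioi] at hx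
    exact (key x hx).differentiableAt.differentiableWithinAt
  · intro x hx
    rw [interior_Ioi] at hx
    rw [(key x hx).deriv]
    have : (0:ℝ) ≤ Real.sqrt s * ‖f' (X x + Real.sqrt s • V x)‖ ^ 2 :=
      mul_nonneg (Real.sqrt_nonneg s) (by positivity)
    linarith
end

section
/- For every step size s with 0 < s ≤ 1/L, the sequence {y_k} generated by critical NAG obeys lim_{k→∞} [ s k · min_{0 ≤ i ≤ k} ‖∇f(y_i)‖² ] = 0, and the objective value is bounded: f(y_k) − f(x⋆) ≤ f(y₀) − f(x⋆) + (1/2)‖v₁‖² for all k ≥ 0, where v_k = (x_k − x_{k−1})/√s. -/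
open Set Filter Topology

section NAGAux

open RealInnerProductSpace

variable {E : Type*} [NormedAddCommGroup E] [InnerProductSpace ℝ E] [CompleteSpace E]

lemma nag_lineDeriv_aux (f : E → ℝ) (f' : E → E) (hgrad : ∀ z, HasGradientAt f (f' z) z)
    (a v : E) (t : ℝ) :
    HasDerivAt (fun τ : ℝ => f (a + τ • v)) ⟪f' (a + t • v), v⟫ t := by
  have hpath : HasDerivAt (fun τ : ℝ => a + τ • v) v t := by
    simpa using ((hasDerivAt_id t).smul_const v).const_add a
  have hf := hasGradientAt_iff_hasFDerivAt.mp (hgrad (a + t • v))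
  have := hf.comp_hasDerivAt t hpath
  simp only [InnerProductSpace.toDual_apply_apply] at this
  exact this

lemma nag_first_order (f : E → ℝ) (f' : E → E) (hconv : ConvexOn ℝ Set.univ f)
    (hgrad : ∀ z, HasGradientAt f (f' z) z) (a b : E) :
    f a + ⟪f' a, b - a⟫ ≤ f b := by
  have hd : HasDerivAt (fun t : ℝ => f (a + t • (b - a))) ⟪f' a, b - a⟫ 0 := by
    simpa using nag_lineDeriv_aux f f' hgrad a (b - a) 0
  have hslope := hasDerivAt_iff_tendsto_slope.mp hd
  have h2 : Tendsto (slope (fun t : ℝ => f (a + t • (b - a))) 0) (𝓝[>] 0)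
      (𝓝 ⟪f' a, b - a⟫) :=
    hslope.mono_left (nhdsWithin_mono 0 (fun t ht => Set.mem_compl_singleton_iff.mpr (ne_of_gt ht)))
  have hev : ∀ᶠ t in 𝓝[>] (0:ℝ),
      slope (fun t : ℝ => f (a + t • (b - a))) 0 t ≤ f b - f a := by
    filter_upwards [Ioc_mem_nhdsGT_of_mem (by norm_num : (0:ℝ) ∈ Ico (0:ℝ) 1)] with t ht
    obtain ⟨ht0, ht1⟩ := ht
    have hcvx := hconv.2 (mem_univ a) (mem_univ b) (by linarith : (0:ℝ) ≤ 1 - t) ht0.le (by ring)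
    have hpt : a + t • (b - a) = (1 - t) • a + t • b := by module
    rw [slope_def_field]
    simp only [zero_smul, add_zero, sub_zero]
    rw [div_le_iff₀ ht0, hpt]
    simp only [smul_eq_mul] at hcvx
    nlinarith [hcvx]
  have := le_of_tendsto h2 hev
  linarith

lemma nag_descent_lemma (f : E → ℝ) (f' : E → E) (hgrad : ∀ z, HasGradientAt f (f' z) z)
    {L : ℝ} (hL : 0 < L) (hlip : ∀ z w, ‖f' z - f' w‖ ≤ L * ‖z - w‖) (a b : E) :
    f b ≤ f a + ⟪f' a, b - a⟫ + L / 2 * ‖b - a‖ ^ 2 := by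
  have hcont : Continuous f' := by
    have hl : LipschitzWith (Real.toNNReal L) f' := by
      apply LipschitzWith.of_dist_le_mul
      intro z w
      rw [dist_eq_norm, dist_eq_norm, Real.coe_toNNReal _ hL.le]
      exact hlip z w
    exact hl.continuous
  set v := b - a with hv
  have hψcont : Continuous fun t : ℝ => ⟪f' (a + t • v), v⟫ := by
    apply Continuous.inner
    · exact hcont.comp (by continuity)
    · exact continuous_const
  have hint : IntervalIntegrable (fun t : ℝ => ⟪f' (a + t • v), v⟫)
      MeasureTheory.volume 0 1 := hψcont.intervalIntegrable 0 1
  have heq : ∫ t in (0:ℝ)..1, ⟪f' (a + t • v), v⟫ = f (a + (1:ℝ) • v) - f (a + (0:ℝ) • v) := by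
    exact intervalIntegral.integral_eq_sub_of_hasDerivAt (f := fun t : ℝ => f (a + t • v))
      (fun t _ => nag_lineDeriv_aux f f' hgrad a v t) hint
  have hb : a + (1:ℝ) • v = b := by rw [hv]; module
  have ha : a + (0:ℝ) • v = a := by simp
  have hint2 : IntervalIntegrable (fun t : ℝ => ⟪f' a, v⟫ + L * ‖v‖ ^ 2 * t)
      MeasureTheory.volume 0 1 := by
    apply Continuous.intervalIntegrable
    continuity
  have hmono : ∫ t in (0:ℝ)..1, ⟪f' (a + t • v), v⟫
      ≤ ∫ t in (0:ℝ)..1, (⟪f' a, v⟫ + L * ‖v‖ ^ 2 * t) := by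
    apply intervalIntegral.integral_mono_on (by norm_num) hint hint2
    intro t ht
    obtain ⟨ht0, ht1⟩ := ht
    have h1 : ⟪f' (a + t • v), v⟫ - ⟪f' a, v⟫ = ⟪f' (a + t • v) - f' a, v⟫ :=
      (inner_sub_left _ _ _).symm
    have h2 : ⟪f' (a + t • v) - f' a, v⟫ ≤ ‖f' (a + t • v) - f' a‖ * ‖v‖ :=
      real_inner_le_norm _ _
    have h3 : ‖f' (a + t • v) - f' a‖ ≤ L * ‖a + t • v - a‖ := hlip _ _
    have h4 : ‖a + t • v - a‖ = t * ‖v‖ := by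
      rw [add_sub_cancel_left, norm_smul, Real.norm_eq_abs, abs_of_nonneg ht0]
    have h5 : ‖f' (a + t • v) - f' a‖ * ‖v‖ ≤ (L * (t * ‖v‖)) * ‖v‖ := by
      apply mul_le_mul_of_nonneg_right _ (norm_nonneg v)
      rw [← h4]; exact h3
    nlinarith [h5]
  have hval : ∫ t in (0:ℝ)..1, (⟪f' a, v⟫ + L * ‖v‖ ^ 2 * t)
      = ⟪f' a, v⟫ + L / 2 * ‖v‖ ^ 2 := by
    rw [intervalIntegral.integral_add (intervalIntegrable_const)
      ((by continuity : Continuous fun t : ℝ => L * ‖v‖ ^ 2 * t).intervalIntegrable 0 1)]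
    rw [intervalIntegral.integral_const]
    rw [intervalIntegral.integral_const_mul, integral_id]
    simp
    ring
  rw [heq, hb, ha] at hmono
  rw [hval] at hmono
  linarith

lemma nag_coco_lemma (f : E → ℝ) (f' : E → E) (hconv : ConvexOn ℝ Set.univ f)
    (hgrad : ∀ z, HasGradientAt f (f' z) z)
    {L : ℝ} (hL : 0 < L) (hlip : ∀ z w, ‖f' z - f' w‖ ≤ L * ‖z - w‖) (a b : E) :
    f a + ⟪f' a, b - a⟫ + 1 / (2 * L) * ‖f' b - f' a‖ ^ 2 ≤ f b := by
  have hL0 : L ≠ 0 := ne_of_gt hL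
  set Δ := f' b - f' a with hΔ
  set b' := b - (1 / L) • Δ with hb'
  have hA := nag_first_order f f' hconv hgrad a b'
  have hB := nag_descent_lemma f f' hgrad hL hlip b b'
  have e1 : b' - b = -((1 / L) • Δ) := by rw [hb']; abel
  have e2 : ⟪f' b, b' - b⟫ = -(1 / L * ⟪f' b, Δ⟫) := by
    rw [e1, inner_neg_right, real_inner_smul_right]
  have e3 : ‖b' - b‖ ^ 2 = (1 / L) ^ 2 * ‖Δ‖ ^ 2 := by
    rw [e1, norm_neg, norm_smul, mul_pow, Real.norm_eq_abs, sq_abs]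
  have e4 : ⟪f' a, b' - a⟫ = ⟪f' a, b - a⟫ - 1 / L * ⟪f' a, Δ⟫ := by
    rw [show b' - a = (b - a) - (1 / L) • Δ from by rw [hb']; abel,
      inner_sub_right, real_inner_smul_right]
  have e5 : ⟪f' b, Δ⟫ - ⟪f' a, Δ⟫ = ‖Δ‖ ^ 2 := by
    rw [← inner_sub_left, ← hΔ, real_inner_self_eq_norm_sq]
  have hL2 : L / 2 * ((1 / L) ^ 2 * ‖Δ‖ ^ 2) = 1 / (2 * L) * ‖Δ‖ ^ 2 := by
    field_simp
  rw [e2, e3] at hB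
  rw [e4] at hA
  have h6 : 1 / L * ⟪f' b, Δ⟫ - 1 / L * ⟪f' a, Δ⟫ = 1 / L * ‖Δ‖ ^ 2 := by
    rw [← mul_sub, e5]
  have h7 : 1 / L * ‖Δ‖ ^ 2 = 2 * (1 / (2 * L) * ‖Δ‖ ^ 2) := by field_simp
  linarith

lemma nag_sq_expand (p q : E) (c : ℝ) :
    ‖p - c • q‖ ^ 2 = ‖p‖ ^ 2 - 2 * c * ⟪p, q⟫ + c ^ 2 * ‖q‖ ^ 2 := by
  rw [norm_sub_sq_real, real_inner_smul_right, norm_smul, mul_pow, Real.norm_eq_abs, sq_abs]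
  ring

lemma nag_step (s L : ℝ) (hL : 0 < L) (hs : 0 < s) (hsL : s ≤ 1 / L)
    (f : E → ℝ) (f' : E → E) (xstar : E) (x y : ℕ → E)
    (hconv : ConvexOn ℝ Set.univ f)
    (hgrad : ∀ z, HasGradientAt f (f' z) z)
    (hlip : ∀ z w, ‖f' z - f' w‖ ≤ L * ‖z - w‖)
    (hx : ∀ k : ℕ, 1 ≤ k → x k = y (k - 1) - s • f' (y (k - 1)))
    (hy : ∀ k : ℕ, 1 ≤ k → y k = (2 : ℝ) • x k - x (k - 1)) (k : ℕ) :
    f (y (k+1)) - f xstar + 1 / (2*s) * ‖x (k+2) - x (k+1)‖ ^ 2 + s/2 * ‖f' (y k)‖ ^ 2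
      ≤ f (y k) - f xstar + 1 / (2*s) * ‖x (k+1) - x k‖ ^ 2 := by
  have hs0 : s ≠ 0 := ne_of_gt hs
  have hxk1 : x (k+1) = y k - s • f' (y k) := by
    have h := hx (k+1) (by omega)
    have e : k + 1 - 1 = k := by omega
    rw [e] at h; exact h
  have hxk2 : x (k+2) = y (k+1) - s • f' (y (k+1)) := by
    have h := hx (k+2) (by omega)
    have e : k + 2 - 1 = k + 1 := by omega
    rw [e] at h; exact h
  have hyk2 : y (k+1) = (2:ℝ) • x (k+1) - x k := by
    have h := hy (k+1) (by omega)
    have e : k + 1 - 1 = k := by omega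
    rw [e] at h; exact h
  set Gk := f' (y (k+1)) with hGk
  set gk := f' (y k) with hgk
  have d1 : x (k+1) - x k = y k - x k - s • gk := by rw [hxk1]; abel
  have d3' : y k - y (k+1) = (2*s) • gk - (y k - x k) := by
    rw [hyk2, hxk1]; module
  have d4 : x (k+2) - x (k+1) = y k - x k - s • gk - s • Gk := by
    rw [hxk2, hyk2, hxk1]; module
  have iA : ⟪Gk, (2*s) • gk - (y k - x k)⟫ = 2*s*⟪gk, Gk⟫ - ⟪y k - x k, Gk⟫ := by
    rw [inner_sub_right, real_inner_smul_right, real_inner_comm Gk gk,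
      real_inner_comm Gk (y k - x k)]
  have iT : ⟪y k - x k - s • gk, Gk⟫ = ⟪y k - x k, Gk⟫ - s * ⟪gk, Gk⟫ := by
    rw [inner_sub_left, real_inner_smul_left]
  have EC : ‖gk - Gk‖ ^ 2 = ‖gk‖ ^ 2 - 2 * ⟪gk, Gk⟫ + ‖Gk‖ ^ 2 := norm_sub_sq_real gk Gk
  have hC := nag_coco_lemma f f' hconv hgrad hL hlip (y (k+1)) (y k)
  rw [d3', iA, EC] at hC
  have hprod : 0 ≤ (1/(2*L) - s/2) * (‖gk‖^2 + ‖Gk‖^2 - 2*⟪gk, Gk⟫) := by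
    apply mul_nonneg
    · rw [sub_nonneg, show 1/(2*L) = (1/L)/2 by ring]
      linarith
    · have h0 : (0:ℝ) ≤ ‖gk - Gk‖ ^ 2 := sq_nonneg _
      rw [EC] at h0
      linarith
  rw [d1, d4]
  have E2 : ‖y k - x k - s • gk - s • Gk‖ ^ 2
      = ‖y k - x k - s • gk‖ ^ 2 - 2*s*(⟪y k - x k, Gk⟫ - s * ⟪gk, Gk⟫) + s^2 * ‖Gk‖^2 := by
    rw [nag_sq_expand (y k - x k - s • gk) Gk s, iT]
  rw [E2]
  have Ediv : ∀ X A B N : ℝ, 1/(2*s) * (X - 2*s*(A - s*B) + s^2*N)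
      = 1/(2*s)*X - A + s*B + s/2*N := by
    intros; field_simp; ring
  rw [Ediv]
  linarith [hC, hprod]

end NAGAux


lemma nag_min_tendsto (s : ℝ) (hs : 0 < s) (q : ℕ → ℝ) (hq : ∀ i, 0 ≤ q i)
    (hsum : Summable q) :
    Filter.Tendsto (fun k : ℕ => s * (k : ℝ) * sInf (q '' Set.Iic k))
      Filter.atTop (nhds 0) := by
  have hbdd : ∀ k : ℕ, BddBelow (q '' Set.Iic k) := by
    intro k
    refine ⟨0, fun r hr => ?_⟩
    obtain ⟨i, _, rfl⟩ := hr
    exact hq i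
  have hne : ∀ k : ℕ, (q '' Set.Iic k).Nonempty :=
    fun k => ⟨_, ⟨0, Set.mem_Iic.2 (Nat.zero_le k), rfl⟩⟩
  have hm0 : ∀ k, 0 ≤ sInf (q '' Set.Iic k) := by
    intro k
    apply le_csInf (hne k)
    intro b hb
    obtain ⟨i, _, rfl⟩ := hb
    exact hq i
  have hmle : ∀ k i : ℕ, i ≤ k → sInf (q '' Set.Iic k) ≤ q i :=
    fun k i hik => csInf_le (hbdd k) ⟨i, Set.mem_Iic.2 hik, rfl⟩
  have tail_summable : ∀ n : ℕ, Summable (fun j : ℕ => q (j + n)) :=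
    fun n => (summable_nat_add_iff n).2 hsum
  have hb : ∀ k : ℕ, s * (k : ℝ) * sInf (q '' Set.Iic k) ≤ 2*s * ∑' j : ℕ, q (j + k/2) := by
    intro k
    have hcard : (Finset.Icc (k/2) k).card = k + 1 - k/2 := Nat.card_Icc _ _
    have h1 : ((k + 1 - k/2 : ℕ) : ℝ) * sInf (q '' Set.Iic k)
        ≤ ∑ i ∈ Finset.Icc (k/2) k, q i := by
      have := Finset.card_nsmul_le_sum (Finset.Icc (k/2) k)
        q (sInf (q '' Set.Iic k)) (fun i hi => hmle k i (Finset.mem_Icc.1 hi).2)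
      rw [hcard] at this
      simpa [nsmul_eq_mul] using this
    have h2 : ∑ i ∈ Finset.Icc (k/2) k, q i ≤ ∑' j : ℕ, q (j + k/2) := by
      rw [← Finset.Ico_add_one_right_eq_Icc, Finset.sum_Ico_eq_sum_range]
      calc ∑ i ∈ Finset.range (k + 1 - k/2), q (k/2 + i)
          = ∑ i ∈ Finset.range (k + 1 - k/2), q (i + k/2) :=
            Finset.sum_congr rfl (fun i _ => by rw [Nat.add_comm])
        _ ≤ ∑' j : ℕ, q (j + k/2) :=
            Summable.sum_le_tsum _ (fun i _ => hq _) (tail_summable (k/2))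
    have h3 : (k : ℝ) ≤ 2 * ((k + 1 - k/2 : ℕ) : ℝ) := by
      have h4 : k ≤ 2 * (k + 1 - k/2) := by omega
      exact_mod_cast h4
    calc s * (k : ℝ) * sInf (q '' Set.Iic k)
        ≤ s * (2 * ((k + 1 - k/2 : ℕ) : ℝ)) * sInf (q '' Set.Iic k) := by
          apply mul_le_mul_of_nonneg_right (mul_le_mul_of_nonneg_left h3 hs.le) (hm0 k)
      _ = 2 * s * (((k + 1 - k/2 : ℕ) : ℝ) * sInf (q '' Set.Iic k)) := by ring
      _ ≤ 2 * s * ∑' j : ℕ, q (j + k/2) := by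
          apply mul_le_mul_of_nonneg_left (le_trans h1 h2) (by positivity)
  have hdiv : Filter.Tendsto (fun k : ℕ => k / 2) Filter.atTop Filter.atTop :=
    Filter.tendsto_atTop_atTop.2 (fun b => ⟨2*b, fun a ha => by omega⟩)
  have htail : Filter.Tendsto (fun n : ℕ => ∑' j : ℕ, q (j + n)) Filter.atTop (nhds 0) :=
    tendsto_sum_nat_add _
  have hcomp : Filter.Tendsto (fun k : ℕ => 2*s*∑' j : ℕ, q (j + k/2))
      Filter.atTop (nhds 0) := by
    have := (htail.comp hdiv).const_mul (2*s)
    simpa using this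
  exact squeeze_zero
    (fun k => mul_nonneg (mul_nonneg hs.le (Nat.cast_nonneg k)) (hm0 k)) hb hcomp

set_option maxHeartbeats 1000000 in
/-- For every step size s with 0 < s ≤ 1/L, the sequence {y_k}
generated by critical NAG obeys lim_{k→∞} [ s k · min_{0 ≤ i ≤ k} ‖∇f(y_i)‖² ] = 0,
and the objective value is bounded:
f(y_k) − f(x⋆) ≤ f(y₀) − f(x⋆) + (1/2)‖v₁‖² for all k ≥ 0,
where v_k = (x_k − x_{k−1})/√s. -/
theorem critical_NAG_convergence
    (s L : ℝ) (hL : 0 < L) (hs : 0 < s) (hsL : s ≤ 1 / L)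
    {d : ℕ} (f : EuclideanSpace ℝ (Fin d) → ℝ)
    (f' : EuclideanSpace ℝ (Fin d) → EuclideanSpace ℝ (Fin d))
    (xstar : EuclideanSpace ℝ (Fin d))
    (x y : ℕ → EuclideanSpace ℝ (Fin d))
    (hconv : ConvexOn ℝ Set.univ f)
    (hgrad : ∀ z, HasGradientAt f (f' z) z)
    (hlip : ∀ z w, ‖f' z - f' w‖ ≤ L * ‖z - w‖)
    (hmin : ∀ z, f xstar ≤ f z)
    (hy0 : y 0 = x 0)
    (hx : ∀ k : ℕ, 1 ≤ k → x k = y (k - 1) - s • f' (y (k - 1)))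
    (hy : ∀ k : ℕ, 1 ≤ k → y k = (2 : ℝ) • x k - x (k - 1)) :
    Filter.Tendsto
      (fun k : ℕ => s * (k : ℝ) *
        sInf ((fun i : ℕ => ‖f' (y i)‖ ^ 2) '' Set.Iic k))
      Filter.atTop (nhds 0) ∧
    (∀ k : ℕ, f (y k) - f xstar ≤
      f (y 0) - f xstar + (1 / 2) * ‖(Real.sqrt s)⁻¹ • (x 1 - x 0)‖ ^ 2) := by
  have hs0 : s ≠ 0 := ne_of_gt hs
  -- the energy function
  obtain ⟨En, hEn⟩ : ∃ En : ℕ → ℝ,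
      En = fun k => f (y k) - f xstar + 1 / (2*s) * ‖x (k+1) - x k‖ ^ 2 := ⟨_, rfl⟩
  have step : ∀ k : ℕ, En (k+1) + s/2 * ‖f' (y k)‖ ^ 2 ≤ En k := by
    intro k
    simpa [hEn] using
      nag_step s L hL hs hsL f f' xstar x y hconv hgrad hlip hx hy k
  have hEnNonneg : ∀ n, 0 ≤ En n := by
    intro n
    have h1 := hmin (y n)
    have h2 : 0 ≤ 1 / (2*s) * ‖x (n+1) - x n‖ ^ 2 := by positivity
    simp only [hEn]
    linarith
  have tele : ∀ n : ℕ, En n + ∑ i ∈ Finset.range n, s/2 * ‖f' (y i)‖ ^ 2 ≤ En 0 := by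
    intro n
    induction n with
    | zero => simp
    | succ n ih =>
      rw [Finset.sum_range_succ]
      have := step n
      linarith
  -- Part 2
  have part2 : ∀ k : ℕ, f (y k) - f xstar ≤
      f (y 0) - f xstar + (1 / 2) * ‖(Real.sqrt s)⁻¹ • (x 1 - x 0)‖ ^ 2 := by
    have hE0 : En 0 = f (y 0) - f xstar + (1 / 2) * ‖(Real.sqrt s)⁻¹ • (x 1 - x 0)‖ ^ 2 := by
      have : (1 / 2 : ℝ) * ‖(Real.sqrt s)⁻¹ • (x 1 - x 0)‖ ^ 2
          = 1 / (2*s) * ‖x 1 - x 0‖ ^ 2 := by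
        rw [norm_smul, mul_pow, Real.norm_eq_abs, abs_inv,
          abs_of_nonneg (Real.sqrt_nonneg s), inv_pow, Real.sq_sqrt hs.le]
        field_simp
      simp only [hEn]
      rw [this]
    intro k
    have h1 : f (y k) - f xstar ≤ En k := by
      have h2 : 0 ≤ 1 / (2*s) * ‖x (k+1) - x k‖ ^ 2 := by positivity
      simp only [hEn]
      linarith
    have h2 : En k ≤ En 0 := by
      have hsum0 : 0 ≤ ∑ i ∈ Finset.range k, s/2 * ‖f' (y i)‖ ^ 2 :=
        Finset.sum_nonneg (fun i _ => by positivity)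
      linarith [tele k]
    rw [← hE0]
    linarith
  -- Summability of squared gradient norms
  have hsum : Summable (fun i : ℕ => ‖f' (y i)‖ ^ 2) := by
    apply summable_of_sum_range_le (c := 2/s * En 0) (fun n => sq_nonneg _)
    intro n
    have h := tele n
    have hnn := hEnNonneg n
    have hmul : ∑ i ∈ Finset.range n, s/2 * ‖f' (y i)‖ ^ 2
        = s/2 * ∑ i ∈ Finset.range n, ‖f' (y i)‖ ^ 2 := by rw [Finset.mul_sum]
    rw [hmul] at h
    have hS : s/2 * ∑ i ∈ Finset.range n, ‖f' (y i)‖ ^ 2 ≤ En 0 := by linarith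
    have : (2/s) * (s/2 * ∑ i ∈ Finset.range n, ‖f' (y i)‖ ^ 2)
        = ∑ i ∈ Finset.range n, ‖f' (y i)‖ ^ 2 := by field_simp
    calc ∑ i ∈ Finset.range n, ‖f' (y i)‖ ^ 2
        = (2/s) * (s/2 * ∑ i ∈ Finset.range n, ‖f' (y i)‖ ^ 2) := this.symm
      _ ≤ (2/s) * En 0 := by
          apply mul_le_mul_of_nonneg_left hS (by positivity)
  -- Part 1
  have part1 : Filter.Tendsto
      (fun k : ℕ => s * (k : ℝ) * sInf ((fun i : ℕ => ‖f' (y i)‖ ^ 2) '' Set.Iic k))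
      Filter.atTop (nhds 0) :=
    nag_min_tendsto s hs (fun i : ℕ => ‖f' (y i)‖ ^ 2) (fun i => sq_nonneg _) hsum
  exact ⟨part1, part2⟩
end

section
/- For every step size s with 0 < s < 1/L, the sequence {y_k} generated by critical FISTA obeys lim_{k→∞} [ s k · min_{0 ≤ i ≤ k} ‖G_s(y_i)‖² ] = 0, and the objective value Φ(x_k) − Φ(x⋆) is bounded above by Φ(x₁) − Φ(x⋆) + (1/2)‖v₁‖² for all k ≥ 1, where v_k = (x_k − x_{k−1})/√s. -/
open Set Filter Topology RealInnerProductSpace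

variable {F : Type*} [NormedAddCommGroup F] [InnerProductSpace ℝ F] [CompleteSpace F]




lemma line_deriv (f : F → ℝ) (gr w v : F) (t : ℝ) (h : HasGradientAt f gr (w + t • v)) :
    HasDerivAt (fun r : ℝ => f (w + r • v)) ⟪gr, v⟫ t := by
  have hc : HasDerivAt (fun r : ℝ => w + r • v) v t := by
    simpa using ((hasDerivAt_id t).smul_const v).const_add w
  have h2 := (h.hasFDerivAt).comp_hasDerivAt t hc
  simp [Function.comp, InnerProductSpace.toDual_apply_apply] at h2
  exact h2

lemma convex_grad_ineq (f : F → ℝ) (hf : ConvexOn ℝ Set.univ f) (gr w u : F)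
    (h : HasGradientAt f gr w) : f w + ⟪gr, u - w⟫ ≤ f u := by
  set φ : ℝ → ℝ := fun t => f (w + t • (u - w)) with hφ
  have hder : HasDerivAt φ ⟪gr, u - w⟫ 0 :=
    line_deriv f gr w (u - w) 0 (by simpa using h)
  have hslope := hasDerivAt_iff_tendsto_slope.1 hder
  have hslope' : Tendsto (slope φ 0) (𝓝[>] 0) (𝓝 ⟪gr, u - w⟫) :=
    hslope.mono_left (nhdsWithin_mono 0 (fun x hx => Set.mem_compl_singleton_iff.mpr (ne_of_gt hx)))
  have hub : ∀ᶠ t in 𝓝[>] (0:ℝ), slope φ 0 t ≤ f u - f w := by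
    filter_upwards [Ioc_mem_nhdsGT_of_mem (Set.mem_Ico.mpr ⟨le_refl 0, zero_lt_one⟩)] with t ht
    obtain ⟨ht0, ht1⟩ := ht
    have hcv : φ t ≤ (1 - t) * f w + t * f u := by
      have he : w + t • (u - w) = (1 - t) • w + t • u := by module
      rw [hφ]; dsimp only; rw [he]
      exact hf.2 (Set.mem_univ w) (Set.mem_univ u) (by linarith) ht0.le (by ring)
    have hφ0 : φ 0 = f w := by simp [hφ]
    rw [slope_def_field, hφ0, sub_zero, div_le_iff₀ ht0]
    nlinarith
  have := le_of_tendsto hslope' hub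
  linarith



lemma descent_lemma (f : F → ℝ) (f' : F → F) (L : ℝ) (hL : 0 ≤ L)
    (hgrad : ∀ z, HasGradientAt f (f' z) z) (hlip : ∀ z w, ‖f' z - f' w‖ ≤ L * ‖z - w‖)
    (w u : F) : f u ≤ f w + ⟪f' w, u - w⟫ + L / 2 * ‖u - w‖ ^ 2 := by
  set v := u - w with hv
  set ψ : ℝ → ℝ := fun t => f w + t * ⟪f' w, v⟫ + L * ‖v‖ ^ 2 * t ^ 2 / 2 - f (w + t • v) with hψ
  have hder : ∀ t : ℝ, HasDerivAt ψ
      (⟪f' w, v⟫ + L * ‖v‖ ^ 2 * t - ⟪f' (w + t • v), v⟫) t := by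
    intro t
    have ha : HasDerivAt (fun r : ℝ => f w + r * ⟪f' w, v⟫) ⟪f' w, v⟫ t := by
      simpa using ((hasDerivAt_id t).mul_const ⟪f' w, v⟫).const_add (f w)
    have hb : HasDerivAt (fun r : ℝ => L * ‖v‖ ^ 2 * r ^ 2 / 2) (L * ‖v‖ ^ 2 * t) t := by
      have h2 := ((hasDerivAt_pow 2 t).const_mul (L * ‖v‖ ^ 2)).div_const 2
      refine h2.congr_deriv ?_
      rw [show (2:ℕ) - 1 = 1 from rfl]
      push_cast
      ring
    exact (ha.add hb).sub (line_deriv f (f' (w + t • v)) w v t (hgrad _))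
  have hmono : MonotoneOn ψ (Set.Icc 0 1) := by
    apply monotoneOn_of_deriv_nonneg (convex_Icc 0 1)
    · exact fun t _ => ((hder t).differentiableAt.continuousAt).continuousWithinAt
    · exact fun t _ => ((hder t).differentiableAt).differentiableWithinAt
    · intro t ht
      rw [interior_Icc] at ht
      rw [(hder t).deriv]
      have h2 : ⟪f' (w + t • v) - f' w, v⟫ ≤ L * ‖v‖ ^ 2 * t := by
        calc ⟪f' (w + t • v) - f' w, v⟫ ≤ ‖f' (w + t • v) - f' w‖ * ‖v‖ :=
              real_inner_le_norm _ _
          _ ≤ (L * ‖w + t • v - w‖) * ‖v‖ :=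
              mul_le_mul_of_nonneg_right (hlip _ _) (norm_nonneg _)
          _ = L * ‖v‖ ^ 2 * t := by
              rw [show w + t • v - w = t • v by abel, norm_smul, Real.norm_eq_abs,
                abs_of_pos ht.1]
              ring
      have h3 : ⟪f' (w + t • v), v⟫ = ⟪f' w, v⟫ + ⟪f' (w + t • v) - f' w, v⟫ := by
        rw [inner_sub_left]; ring
      linarith
  have h01 := hmono (Set.left_mem_Icc.mpr zero_le_one) (Set.right_mem_Icc.mpr zero_le_one)
    zero_le_one
  have e0 : ψ 0 = 0 := by simp [hψ]
  have e1 : ψ 1 = f w + ⟪f' w, v⟫ + L * ‖v‖ ^ 2 / 2 - f u := by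
    simp only [hψ, one_smul, one_pow, mul_one]
    rw [show w + v = u by rw [hv]; abel]
    ring
  rw [e0, e1] at h01
  linarith

lemma aux_nonneg {c d : ℝ} (hd : 0 ≤ d) (h : ∀ t : ℝ, 0 < t → t ≤ 1 → 0 ≤ c + t * d) :
    0 ≤ c := by
  by_contra hc
  push_neg at hc
  rcases eq_or_lt_of_le hd with hd0 | hd0
  · have := h 1 one_pos le_rfl
    nlinarith
  · have ht0 : 0 < min 1 (-c / (2 * d)) := by
      exact lt_min one_pos (div_pos (by linarith) (by linarith))
    have h1 := h _ ht0 (min_le_left _ _)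
    have h2 : min 1 (-c / (2 * d)) * d ≤ (-c / (2 * d)) * d :=
      mul_le_mul_of_nonneg_right (min_le_right _ _) hd
    have h3 : (-c / (2 * d)) * d = -c / 2 := by field_simp
    nlinarith

lemma prox_subgrad (s : ℝ) (hs : 0 < s) (g : F → ℝ) (hg : ConvexOn ℝ Set.univ g) (b p : F)
    (hmin : IsMinOn (fun w => 1 / (2 * s) * ‖w - b‖ ^ 2 + g w) Set.univ p) (u : F) :
    g p + s⁻¹ * ⟪b - p, u - p⟫ ≤ g u := by
  set v := u - p with hv
  have key : ∀ t : ℝ, 0 < t → t ≤ 1 →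
      0 ≤ (s⁻¹ * ⟪p - b, v⟫ + (g u - g p)) + t * (‖v‖ ^ 2 / (2 * s)) := by
    intro t ht ht1
    have hmin' := hmin (Set.mem_univ (p + t • v))
    simp only [Set.mem_setOf_eq] at hmin'
    have hnorm : ‖p + t • v - b‖ ^ 2 = ‖p - b‖ ^ 2 + 2 * (t * ⟪p - b, v⟫) + t ^ 2 * ‖v‖ ^ 2 := by
      rw [show p + t • v - b = (p - b) + t • v by abel, norm_add_sq_real,
        real_inner_smul_right, norm_smul, Real.norm_eq_abs]
      rw [mul_pow, sq_abs]
    have e1 : 1 / (2 * s) * ‖p + t • v - b‖ ^ 2 =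
        1 / (2 * s) * ‖p - b‖ ^ 2 + s⁻¹ * (t * ⟪p - b, v⟫) + t ^ 2 * ‖v‖ ^ 2 / (2 * s) := by
      rw [hnorm]; field_simp
    have hconv : g (p + t • v) ≤ g p + t * (g u - g p) := by
      have h2 : p + t • v = (1 - t) • p + t • u := by rw [hv]; module
      calc g (p + t • v) = g ((1 - t) • p + t • u) := by rw [h2]
        _ ≤ (1 - t) * g p + t * g u :=
            hg.2 (Set.mem_univ p) (Set.mem_univ u) (by linarith) ht.le (by ring)
        _ = g p + t * (g u - g p) := by ring
    have e2 : s⁻¹ * (t * ⟪p - b, v⟫) + t ^ 2 * ‖v‖ ^ 2 / (2 * s) + t * (g u - g p) =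
        t * ((s⁻¹ * ⟪p - b, v⟫ + (g u - g p)) + t * (‖v‖ ^ 2 / (2 * s))) := by
      ring
    have h4 : 0 ≤ t * ((s⁻¹ * ⟪p - b, v⟫ + (g u - g p)) + t * (‖v‖ ^ 2 / (2 * s))) := by
      rw [← e2]
      have := hmin'
      linarith [e1 ▸ hmin', hconv]
    exact nonneg_of_mul_nonneg_right h4 ht
  have hX : 0 ≤ s⁻¹ * ⟪p - b, v⟫ + (g u - g p) :=
    aux_nonneg (by positivity) key
  have hpb : ⟪b - p, v⟫ = -⟪p - b, v⟫ := by
    rw [show b - p = -(p - b) by abel, inner_neg_left]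
  rw [hpb]
  linarith [hX, mul_le_mul_of_nonneg_left (le_refl (0:ℝ)) hs.le]



lemma key_ineq_s18 (s L : ℝ) (hs : 0 < s) (hL : 0 < L)
    (f g : F → ℝ) (f' : F → F)
    (hfconv : ConvexOn ℝ Set.univ f)
    (hgrad : ∀ z, HasGradientAt f (f' z) z)
    (hlip : ∀ z w, ‖f' z - f' w‖ ≤ L * ‖z - w‖)
    (hgconv : ConvexOn ℝ Set.univ g)
    (z p u : F)
    (hm : IsMinOn (fun w => 1 / (2 * s) * ‖w - (z - s • f' z)‖ ^ 2 + g w) Set.univ p) :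
    f p + g p ≤ f u + g u + ⟪s⁻¹ • (z - p), z - u⟫ -
      (s - L * s ^ 2 / 2) * ‖s⁻¹ • (z - p)‖ ^ 2 := by
  set G : F := s⁻¹ • (z - p) with hGdef
  have hG : z - p = s • G := by
    rw [hGdef, smul_inv_smul₀ hs.ne']
  have hA := convex_grad_ineq f hfconv (f' z) z u (hgrad z)
  have hB := descent_lemma f f' L hL.le hgrad hlip z p
  have hC := prox_subgrad s hs g hgconv (z - s • f' z) p hm u
  have E1 : ⟪f' z, u - z⟫ = ⟪f' z, u - p⟫ + ⟪f' z, p - z⟫ := by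
    rw [← inner_add_right]
    congr 1
    abel
  have E2 : L / 2 * ‖p - z‖ ^ 2 = L * s ^ 2 / 2 * ‖G‖ ^ 2 := by
    rw [show p - z = -(s • G) by rw [← hG]; abel, norm_neg, norm_smul, Real.norm_eq_abs,
      mul_pow, sq_abs]
    ring
  have E3 : s⁻¹ * ⟪z - s • f' z - p, u - p⟫ = ⟪G, u - p⟫ - ⟪f' z, u - p⟫ := by
    rw [show z - s • f' z - p = (z - p) - s • f' z by abel, inner_sub_left,
      real_inner_smul_left, hGdef, real_inner_smul_left]
    field_simp
  have E4 : ⟪G, u - p⟫ = ⟪G, u - z⟫ + s * ‖G‖ ^ 2 := by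
    rw [show u - p = (u - z) + (z - p) by abel, inner_add_right, hG, real_inner_smul_right,
      real_inner_self_eq_norm_sq]
  have E5 : ⟪G, z - u⟫ = -⟪G, u - z⟫ := by
    rw [show z - u = -(u - z) by abel, inner_neg_right]
  rw [E5]
  linarith [hA, hB, hC, E1, E2, E3, E4]

lemma kmin_tendsto (a : ℕ → ℝ) (ha : ∀ i, 0 ≤ a i) (hsum : Summable fun k => a (k + 1)) :
    Tendsto (fun k : ℕ => (k : ℝ) * sInf (a '' Set.Iic k)) atTop (𝓝 0) := by
  set m : ℕ → ℝ := fun k => sInf (a '' Set.Iic k) with hm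
  have hbdd : ∀ k, BddBelow (a '' Set.Iic k) := by
    intro k
    refine ⟨0, ?_⟩
    rintro r ⟨i, -, rfl⟩
    exact ha i
  have hm0 : ∀ k, 0 ≤ m k := by
    intro k
    apply le_csInf ⟨a 0, Set.mem_image_of_mem a (Set.mem_Iic.2 (Nat.zero_le k))⟩
    rintro r ⟨i, -, rfl⟩
    exact ha i
  have hmle : ∀ i k, i ≤ k → m k ≤ a i := fun i k h =>
    csInf_le (hbdd k) ⟨i, Set.mem_Iic.2 h, rfl⟩
  rw [Metric.tendsto_atTop]
  intro ε hε
  set b : ℕ → ℝ := fun k => a (k + 1) with hb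
  set t : ℝ := ∑' k, b k with ht
  obtain ⟨N, hN⟩ : ∃ N, t - ε / 4 < ∑ i ∈ Finset.range N, b i :=
    ((hsum.hasSum.tendsto_sum_nat).eventually (eventually_gt_nhds (by linarith))).exists
  refine ⟨2 * N + 2, fun k hk => ?_⟩
  have h1 : ∀ n, ∑ i ∈ Finset.range n, b i ≤ t := fun n =>
    hsum.sum_le_tsum _ (fun i _ => ha _)
  have h2 : ∑ i ∈ Finset.Ico N k, b i < ε / 4 := by
    rw [Finset.sum_Ico_eq_sub _ (by omega)]
    linarith [h1 k]
  have h3 : (Finset.Ico N k).card • m k ≤ ∑ i ∈ Finset.Ico N k, b i := by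
    apply Finset.card_nsmul_le_sum
    intro i hi
    rw [Finset.mem_Ico] at hi
    exact hmle (i + 1) k (by omega)
  rw [Nat.card_Ico, nsmul_eq_mul, Nat.cast_sub (by omega)] at h3
  have h4 : ((k : ℝ) - N) * m k < ε / 4 := lt_of_le_of_lt h3 h2
  rw [Real.dist_eq, sub_zero, abs_of_nonneg (mul_nonneg (Nat.cast_nonneg k) (hm0 k))]
  have h6 : (k : ℝ) ≤ 2 * ((k : ℝ) - N) := by
    have hk' : (2 * N + 2 : ℕ) ≤ k := hk
    have : ((2 * N + 2 : ℕ) : ℝ) ≤ (k : ℝ) := Nat.cast_le.mpr hk'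
    push_cast at this
    linarith
  have h7 := mul_le_mul_of_nonneg_right h6 (hm0 k)
  linarith


/-- For every step size s with 0 < s < 1/L, the sequence {y_k}
generated by critical FISTA obeys
lim_{k→∞} [ s k · min_{0 ≤ i ≤ k} ‖G_s(y_i)‖² ] = 0, and the objective value
Φ(x_k) − Φ(x⋆) is bounded above by Φ(x₁) − Φ(x⋆) + (1/2)‖v₁‖² for all k ≥ 1,
where v_k = (x_k − x_{k−1})/√s. -/
theorem critical_FISTA_convergence
    (s L : ℝ) (hL : 0 < L) (hs : 0 < s) (hsL : s < 1 / L)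
    {d : ℕ} (f g : EuclideanSpace ℝ (Fin d) → ℝ)
    (f' : EuclideanSpace ℝ (Fin d) → EuclideanSpace ℝ (Fin d))
    (xstar : EuclideanSpace ℝ (Fin d))
    (P : EuclideanSpace ℝ (Fin d) → EuclideanSpace ℝ (Fin d))
    (x y : ℕ → EuclideanSpace ℝ (Fin d))
    (hfconv : ConvexOn ℝ Set.univ f)
    (hgrad : ∀ z, HasGradientAt f (f' z) z)
    (hlip : ∀ z w, ‖f' z - f' w‖ ≤ L * ‖z - w‖)
    (hgconv : ConvexOn ℝ Set.univ g)
    (hgcont : Continuous g)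
    (hmin : ∀ z, f xstar + g xstar ≤ f z + g z)
    (hP : ∀ z, IsMinOn
      (fun w => (1 / (2 * s)) * ‖w - (z - s • f' z)‖ ^ 2 + g w) Set.univ (P z))
    (hy0 : y 0 = x 0)
    (hx : ∀ k : ℕ, 1 ≤ k →
      x k = y (k - 1) - s • (s⁻¹ • (y (k - 1) - P (y (k - 1)))))
    (hy : ∀ k : ℕ, 1 ≤ k → y k = (2 : ℝ) • x k - x (k - 1)) :
    Filter.Tendsto
      (fun k : ℕ => s * (k : ℝ) *
        sInf ((fun i : ℕ => ‖s⁻¹ • (y i - P (y i))‖ ^ 2) '' Set.Iic k))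
      Filter.atTop (nhds 0) ∧
    (∀ k : ℕ, 1 ≤ k →
      (f (x k) + g (x k)) - (f xstar + g xstar) ≤
        (f (x 1) + g (x 1)) - (f xstar + g xstar) +
          (1 / 2) * ‖(Real.sqrt s)⁻¹ • (x 1 - x 0)‖ ^ 2) := by
  have hLs : L * s < 1 := by
    have h1 : s * L < 1 := (lt_div_iff₀ hL).mp hsL
    linarith [h1, mul_comm s L ▸ h1]
  have hδ : 0 < s / 2 - L * s ^ 2 / 2 := by
    have h1 : 0 < s * (1 - L * s) := mul_pos hs (by linarith)
    nlinarith
  have hstep : ∀ k : ℕ, x (k + 1) = y k - s • (s⁻¹ • (y k - P (y k))) := by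
    intro k
    have h := hx (k + 1) (by omega)
    simpa only [Nat.add_sub_cancel] using h
  have hyk : ∀ k : ℕ, y (k + 1) = (2 : ℝ) • x (k + 1) - x k := by
    intro k
    have h := hy (k + 1) (by omega)
    simpa only [Nat.add_sub_cancel] using h
  have hxP : ∀ k : ℕ, x (k + 1) = P (y k) := by
    intro k
    rw [hstep k, smul_inv_smul₀ hs.ne']
    abel
  have hdec : ∀ k : ℕ,
      (f (x (k + 2)) + g (x (k + 2)) - (f xstar + g xstar)) +
        1 / (2 * s) * ‖x (k + 2) - x (k + 1)‖ ^ 2 +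
        (s / 2 - L * s ^ 2 / 2) * ‖s⁻¹ • (y (k + 1) - P (y (k + 1)))‖ ^ 2 ≤
      (f (x (k + 1)) + g (x (k + 1)) - (f xstar + g xstar)) +
        1 / (2 * s) * ‖x (k + 1) - x k‖ ^ 2 := by
    intro k
    have hkey := key_ineq_s18 s L hs hL f g f' hfconv hgrad hlip hgconv
      (y (k + 1)) (P (y (k + 1))) (x (k + 1)) (hP (y (k + 1)))
    have hPz : x (k + 2) = P (y (k + 1)) := hxP (k + 1)
    have hW : y (k + 1) - x (k + 1) = x (k + 1) - x k := by
      rw [hyk k]; module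
    have hW2 : x (k + 2) - x (k + 1) =
        (x (k + 1) - x k) - s • (s⁻¹ • (y (k + 1) - P (y (k + 1)))) := by
      rw [hstep (k + 1), ← hW]; abel
    have F1 : 1 / (2 * s) *
        ‖(x (k + 1) - x k) - s • (s⁻¹ • (y (k + 1) - P (y (k + 1))))‖ ^ 2 =
        1 / (2 * s) * ‖x (k + 1) - x k‖ ^ 2 -
          ⟪x (k + 1) - x k, s⁻¹ • (y (k + 1) - P (y (k + 1)))⟫ +
          s / 2 * ‖s⁻¹ • (y (k + 1) - P (y (k + 1)))‖ ^ 2 := by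
      rw [norm_sub_sq_real, real_inner_smul_right, norm_smul, Real.norm_eq_abs, mul_pow,
        sq_abs]
      field_simp
    have F2 : ⟪s⁻¹ • (y (k + 1) - P (y (k + 1))), y (k + 1) - x (k + 1)⟫ =
        ⟪x (k + 1) - x k, s⁻¹ • (y (k + 1) - P (y (k + 1)))⟫ := by
      rw [hW]; exact real_inner_comm _ _
    rw [hW2, F1, hPz]
    rw [F2] at hkey
    linarith
  have htel : ∀ n : ℕ,
      (s / 2 - L * s ^ 2 / 2) *
        ∑ k ∈ Finset.range n, ‖s⁻¹ • (y (k + 1) - P (y (k + 1)))‖ ^ 2 +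
      ((f (x (n + 1)) + g (x (n + 1)) - (f xstar + g xstar)) +
        1 / (2 * s) * ‖x (n + 1) - x n‖ ^ 2) ≤
      (f (x 1) + g (x 1) - (f xstar + g xstar)) + 1 / (2 * s) * ‖x 1 - x 0‖ ^ 2 := by
    intro n
    induction n with
    | zero => simp
    | succ n ih =>
      rw [Finset.sum_range_succ, mul_add]
      linarith [hdec n, ih]
  have hsummable : Summable (fun k : ℕ =>
      (fun i : ℕ => ‖s⁻¹ • (y i - P (y i))‖ ^ 2) (k + 1)) := by
    apply summable_of_sum_range_le (c := ((f (x 1) + g (x 1) - (f xstar + g xstar)) +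
      1 / (2 * s) * ‖x 1 - x 0‖ ^ 2) / (s / 2 - L * s ^ 2 / 2))
    · intro n; positivity
    · intro n
      rw [le_div_iff₀ hδ]
      have h1 := htel n
      have h2 : 0 ≤ f (x (n + 1)) + g (x (n + 1)) - (f xstar + g xstar) :=
        sub_nonneg.2 (hmin _)
      have h3 : 0 ≤ 1 / (2 * s) * ‖x (n + 1) - x n‖ ^ 2 := by positivity
      nlinarith [h1, h2, h3]
  constructor
  · have h := kmin_tendsto (fun i : ℕ => ‖s⁻¹ • (y i - P (y i))‖ ^ 2)
      (fun i => by positivity) hsummable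
    have h2 := h.const_mul s
    simpa [mul_assoc] using h2
  · intro k hk
    obtain ⟨j, rfl⟩ : ∃ j, k = j + 1 := ⟨k - 1, by omega⟩
    have h1 := htel j
    have hsumnn : 0 ≤ (s / 2 - L * s ^ 2 / 2) *
        ∑ k ∈ Finset.range j, ‖s⁻¹ • (y (k + 1) - P (y (k + 1)))‖ ^ 2 :=
      mul_nonneg hδ.le (Finset.sum_nonneg fun i _ => by positivity)
    have h3 : 0 ≤ 1 / (2 * s) * ‖x (j + 1) - x j‖ ^ 2 := by positivity
    have hnorm : (1 / 2 : ℝ) * ‖(Real.sqrt s)⁻¹ • (x 1 - x 0)‖ ^ 2 =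
        1 / (2 * s) * ‖x 1 - x 0‖ ^ 2 := by
      rw [norm_smul, Real.norm_eq_abs, mul_pow, sq_abs, inv_pow, Real.sq_sqrt hs.le]
      field_simp
    rw [hnorm]
    linarith
end

section
/- For every step size s with 0 < s < 1/L, along the iterates of critical FISTA the Lyapunov function E(k) = Φ(x_k) − Φ(x⋆) + (1/2)‖v_k‖², where v_k = (x_k − x_{k−1})/√s, satisfies E(k+1) − E(k) ≤ − (s(1 − sL)/2) ‖G_s(y_k)‖² for all k ≥ 1. -/
open Set Filter Topology
open scoped RealInnerProductSpace


section Aux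

variable {E : Type*} [NormedAddCommGroup E] [InnerProductSpace ℝ E] [CompleteSpace E]

lemma aux_deriv_line {f : E → ℝ} {f' : E → E} (hgrad : ∀ z, HasGradientAt f (f' z) z)
    (c v : E) (t : ℝ) :
    HasDerivAt (fun t : ℝ => f (c + t • v)) ⟪f' (c + t • v), v⟫ t := by
  have h1 : HasDerivAt (fun t : ℝ => c + t • v) v t := by
    simpa using ((hasDerivAt_id t).smul_const v).const_add c
  have h2 := (hgrad (c + t • v)).hasFDerivAt
  have h3 := h2.comp_hasDerivAt t h1
  have h4 := h3
  simp at h4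
  exact h4

lemma aux_convex_grad {f : E → ℝ} {f' : E → E} (hfconv : ConvexOn ℝ Set.univ f)
    (hgrad : ∀ z, HasGradientAt f (f' z) z) (y z : E) :
    f y + ⟪f' y, z - y⟫ ≤ f z := by
  set φ : ℝ → ℝ := fun t => f (y + t • (z - y)) with hφ
  have hφconv : ConvexOn ℝ Set.univ φ := by
    have h := hfconv.comp_affineMap (AffineMap.lineMap y z : ℝ →ᵃ[ℝ] E)
    have : φ = f ∘ (AffineMap.lineMap y z : ℝ →ᵃ[ℝ] E) := by
      funext t
      simp [hφ, AffineMap.lineMap_apply]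
      rw [add_comm]
    rw [this]
    simpa using h
  have hd : HasDerivAt φ ⟪f' y, z - y⟫ 0 := by
    have := aux_deriv_line hgrad y (z - y) 0
    simpa using this
  have hslope := hφconv.le_slope_of_hasDerivAt (mem_univ (0:ℝ)) (mem_univ 1) zero_lt_one hd
  have : slope φ 0 1 = φ 1 - φ 0 := by simp [slope_def_field]
  rw [this] at hslope
  have h0 : φ 0 = f y := by simp [hφ]
  have h1 : φ 1 = f z := by simp [hφ]
  rw [h0, h1] at hslope
  linarith

lemma aux_descent {f : E → ℝ} {f' : E → E} {L : ℝ}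
    (hgrad : ∀ z, HasGradientAt f (f' z) z)
    (hlip : ∀ z w, ‖f' z - f' w‖ ≤ L * ‖z - w‖) (y z : E) :
    f z ≤ f y + ⟪f' y, z - y⟫ + (L / 2) * ‖z - y‖ ^ 2 := by
  set v := z - y with hv
  set h : ℝ → ℝ := fun t => f (y + t • v) - t * ⟪f' y, v⟫ - (L / 2) * t ^ 2 * ‖v‖ ^ 2 with hh
  have hder : ∀ t : ℝ, HasDerivAt h
      (⟪f' (y + t • v), v⟫ - ⟪f' y, v⟫ - L * t * ‖v‖ ^ 2) t := by
    intro t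
    have h1 := aux_deriv_line hgrad y v t
    have h2 : HasDerivAt (fun t : ℝ => t * ⟪f' y, v⟫) ⟪f' y, v⟫ t := by
      simpa using (hasDerivAt_id t).mul_const ⟪f' y, v⟫
    have h3 : HasDerivAt (fun t : ℝ => (L / 2) * t ^ 2 * ‖v‖ ^ 2) (L * t * ‖v‖ ^ 2) t := by
      have : HasDerivAt (fun t : ℝ => t ^ 2) (2 * t) t := by
        simpa using hasDerivAt_pow 2 t
      have := (this.const_mul (L / 2)).mul_const (‖v‖ ^ 2)
      exact this.congr_deriv (by ring)
    have := (h1.sub h2).sub h3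
    exact this
  have hanti : AntitoneOn h (Icc 0 1) := by
    apply antitoneOn_of_deriv_nonpos (convex_Icc 0 1)
    · exact fun t _ => ((hder t).continuousAt).continuousWithinAt
    · exact fun t _ => ((hder t).differentiableAt).differentiableWithinAt
    · intro t ht
      rw [interior_Icc] at ht
      rw [(hder t).deriv]
      have hb : ⟪f' (y + t • v) - f' y, v⟫ ≤ ‖f' (y + t • v) - f' y‖ * ‖v‖ :=
        real_inner_le_norm _ _
      have hl : ‖f' (y + t • v) - f' y‖ ≤ L * (t * ‖v‖) := by
        have := hlip (y + t • v) y
        simpa [norm_smul, abs_of_nonneg ht.1.le, mul_assoc] using this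
      have hsplit : ⟪f' (y + t • v), v⟫ - ⟪f' y, v⟫ = ⟪f' (y + t • v) - f' y, v⟫ := by
        rw [inner_sub_left]
      rw [hsplit]
      have hnv : (0:ℝ) ≤ ‖v‖ := norm_nonneg v
      nlinarith [mul_le_mul_of_nonneg_right hl hnv]
  have := hanti (left_mem_Icc.2 zero_le_one) (right_mem_Icc.2 zero_le_one) zero_le_one
  simp only [hh] at this
  simp only [zero_smul, add_zero, one_smul, zero_mul, sub_zero, zero_pow, mul_zero,
    one_pow, mul_one] at this
  have hz : y + v = z := by simp [hv]
  rw [hz] at this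
  linarith

end Aux


section Aux2
variable {E : Type*} [NormedAddCommGroup E] [InnerProductSpace ℝ E]

lemma aux_prox {g : E → ℝ} (hgconv : ConvexOn ℝ Set.univ g) {s : ℝ} (hs : 0 < s)
    {u p : E} (hP : IsMinOn (fun w => (1 / (2 * s)) * ‖w - u‖ ^ 2 + g w) Set.univ p)
    (w : E) : g p + (1 / s) * ⟪u - p, w - p⟫ ≤ g w := by
  set B := ‖w - p‖ ^ 2 with hB
  have hB0 : 0 ≤ B := by positivity
  have hflip : ⟪u - p, w - p⟫ = -⟪p - u, w - p⟫ := by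
    rw [show u - p = -(p - u) from by abel, inner_neg_left]
  have key : ∀ t : ℝ, 0 < t → t ≤ 1 →
      -(t / (2 * s)) * B ≤ g w - g p + (1 / s) * ⟪p - u, w - p⟫ := by
    intro t ht ht1
    have hmin := isMinOn_iff.mp hP ((1 - t) • p + t • w) (mem_univ _)
    have hgc := hgconv.2 (mem_univ p) (mem_univ w) (by linarith : (0:ℝ) ≤ 1 - t) ht.le
      (by ring : (1 - t) + t = 1)
    simp only [smul_eq_mul] at hgc
    have hpt : ((1 - t) • p + t • w) - u = (p - u) + t • (w - p) := by module
    rw [hpt] at hmin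
    have hnorm : ‖(p - u) + t • (w - p)‖ ^ 2
        = ‖p - u‖ ^ 2 + 2 * (t * ⟪p - u, w - p⟫) + t ^ 2 * B := by
      rw [norm_add_sq_real, real_inner_smul_right, norm_smul, mul_pow, Real.norm_eq_abs,
        sq_abs, hB]
    rw [hnorm] at hmin
    have hdist : (1 / (2 * s)) * (‖p - u‖ ^ 2 + 2 * (t * ⟪p - u, w - p⟫) + t ^ 2 * B)
        = (1 / (2 * s)) * ‖p - u‖ ^ 2 + (1 / (2 * s)) * (2 * (t * ⟪p - u, w - p⟫))
          + (1 / (2 * s)) * (t ^ 2 * B) := by ring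
    rw [hdist] at hmin
    have hprod : 0 ≤ t * ((1 / s) * ⟪p - u, w - p⟫ + (t / (2 * s)) * B + (g w - g p)) := by
      have hexp : t * ((1 / s) * ⟪p - u, w - p⟫ + (t / (2 * s)) * B + (g w - g p))
          = (1 / (2 * s)) * (2 * (t * ⟪p - u, w - p⟫)) + (1 / (2 * s)) * (t ^ 2 * B)
            + (t * g w - t * g p) := by
        field_simp
      rw [hexp]
      linarith
    have hkey := (mul_nonneg_iff_of_pos_left ht).mp hprod
    linarith
  rw [hflip]
  have ha : ∀ ε : ℝ, 0 < ε → (0:ℝ) ≤ (g w - g p + (1 / s) * ⟪p - u, w - p⟫) + ε := by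
    intro ε hε
    set t := min 1 (2 * s * ε / (B + 1)) with htdef
    have ht0 : 0 < t := lt_min one_pos (by positivity)
    have ht1 : t ≤ 1 := min_le_left _ _
    have hkey := key t ht0 ht1
    have htB : t * B ≤ 2 * s * ε := by
      have h1 : t ≤ 2 * s * ε / (B + 1) := min_le_right _ _
      have h2 : t * B ≤ (2 * s * ε / (B + 1)) * B := mul_le_mul_of_nonneg_right h1 hB0
      have h3 : (2 * s * ε / (B + 1)) * B ≤ 2 * s * ε := by
        rw [div_mul_eq_mul_div, div_le_iff₀ (by positivity)]
        nlinarith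
      linarith
    have h4 : -(ε) ≤ -(t / (2 * s)) * B := by
      have h5 : t / (2 * s) * B ≤ ε := by
        rw [div_mul_eq_mul_div, div_le_iff₀ (by linarith)]
        linarith
      linarith
    linarith
  have := le_of_forall_pos_le_add ha
  linarith
end Aux2


set_option maxHeartbeats 1000000 in
/-- For every step size s with 0 < s < 1/L, along the iterates of
critical FISTA the Lyapunov function E(k) = Φ(x_k) − Φ(x⋆) + (1/2)‖v_k‖²,
where v_k = (x_k − x_{k−1})/√s, satisfies
E(k+1) − E(k) ≤ − (s(1 − sL)/2) ‖G_s(y_k)‖² for all k ≥ 1. -/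

theorem critical_FISTA_lyapunov_decay
    (s L : ℝ) (hL : 0 < L) (hs : 0 < s) (hsL : s < 1 / L)
    {d : ℕ} (f g : EuclideanSpace ℝ (Fin d) → ℝ)
    (f' : EuclideanSpace ℝ (Fin d) → EuclideanSpace ℝ (Fin d))
    (xstar : EuclideanSpace ℝ (Fin d))
    (P : EuclideanSpace ℝ (Fin d) → EuclideanSpace ℝ (Fin d))
    (x y : ℕ → EuclideanSpace ℝ (Fin d))
    (hfconv : ConvexOn ℝ Set.univ f)
    (hgrad : ∀ z, HasGradientAt f (f' z) z)
    (hlip : ∀ z w, ‖f' z - f' w‖ ≤ L * ‖z - w‖)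
    (hgconv : ConvexOn ℝ Set.univ g)
    (hgcont : Continuous g)
    (hmin : ∀ z, f xstar + g xstar ≤ f z + g z)
    (hP : ∀ z, IsMinOn
      (fun w => (1 / (2 * s)) * ‖w - (z - s • f' z)‖ ^ 2 + g w) Set.univ (P z))
    (hy0 : y 0 = x 0)
    (hx : ∀ k : ℕ, 1 ≤ k →
      x k = y (k - 1) - s • (s⁻¹ • (y (k - 1) - P (y (k - 1)))))
    (hy : ∀ k : ℕ, 1 ≤ k → y k = (2 : ℝ) • x k - x (k - 1)) :
    ∀ k : ℕ, 1 ≤ k →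
      ((f (x (k + 1)) + g (x (k + 1))) - (f xstar + g xstar) +
            (1 / 2) * ‖(Real.sqrt s)⁻¹ • (x (k + 1) - x k)‖ ^ 2) -
          ((f (x k) + g (x k)) - (f xstar + g xstar) +
            (1 / 2) * ‖(Real.sqrt s)⁻¹ • (x k - x (k - 1))‖ ^ 2) ≤
        -(s * (1 - s * L) / 2) * ‖s⁻¹ • (y k - P (y k))‖ ^ 2 := by
  intro k hk
  have hs' : s ≠ 0 := ne_of_gt hs
  set p := P (y k) with hp
  set G := s⁻¹ • (y k - p) with hG
  set u := x k - x (k - 1) with hudef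
  have hsG : s • G = y k - p := by rw [hG, smul_smul, mul_inv_cancel₀ hs', one_smul]
  have hxk1 : x (k + 1) = p := by
    have h := hx (k + 1) (by omega)
    simp only [Nat.add_sub_cancel] at h
    rw [← hp] at h
    rw [h, ← hG, hsG]
    abel
  have hu : y k - x k = u := by
    have h := hy k hk
    rw [h, hudef]
    module
  have hxk : x k = y k - u := by rw [← hu]; abel
  -- three key inequalities
  have hA := aux_convex_grad hfconv hgrad (y k) (x k)
  have hB := aux_descent hgrad hlip (y k) p
  have hC := aux_prox hgconv hs (hP (y k)) (x k)
  rw [← hp] at hC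
  -- scalar conversions
  have e1 : ⟪f' (y k), x k - y k⟫ = -⟪f' (y k), u⟫ := by
    rw [show x k - y k = -u from by rw [hxk]; abel, inner_neg_right]
  have e2 : ⟪f' (y k), p - y k⟫ = -(s * ⟪f' (y k), G⟫) := by
    rw [show p - y k = -(s • G) from by rw [hsG]; abel, inner_neg_right, real_inner_smul_right]
  have e3 : ‖p - y k‖ ^ 2 = s ^ 2 * ‖G‖ ^ 2 := by
    rw [show p - y k = -(s • G) from by rw [hsG]; abel, norm_neg, norm_smul, mul_pow,
      Real.norm_eq_abs, sq_abs]
  have e4 : ⟪(y k - s • f' (y k)) - p, x k - p⟫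
      = s * (s * ‖G‖ ^ 2) - s * ⟪G, u⟫ - s * (s * ⟪f' (y k), G⟫) + s * ⟪f' (y k), u⟫ := by
    rw [show (y k - s • f' (y k)) - p = s • G - s • f' (y k) from by rw [hsG]; abel,
      show x k - p = s • G - u from by rw [hxk, hsG]; abel]
    simp only [inner_sub_left, inner_sub_right, real_inner_smul_left, real_inner_smul_right,
      real_inner_self_eq_norm_sq, norm_smul, mul_pow, Real.norm_eq_abs, sq_abs]
    ring
  have e4' : (1 / s) * (s * (s * ‖G‖ ^ 2) - s * ⟪G, u⟫ - s * (s * ⟪f' (y k), G⟫)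
        + s * ⟪f' (y k), u⟫)
      = s * ‖G‖ ^ 2 - ⟪G, u⟫ - s * ⟪f' (y k), G⟫ + ⟪f' (y k), u⟫ := by
    field_simp
  rw [e1] at hA
  rw [e2, e3] at hB
  rw [e4, e4'] at hC
  have hcomm : ⟪u, G⟫ = ⟪G, u⟫ := real_inner_comm _ _
  -- norm rewrites in the goal
  have hsqrt : ∀ w : EuclideanSpace ℝ (Fin d),
      ‖(Real.sqrt s)⁻¹ • w‖ ^ 2 = s⁻¹ * ‖w‖ ^ 2 := by
    intro w
    rw [norm_smul, mul_pow, Real.norm_eq_abs, sq_abs, ← Real.sqrt_inv,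
      Real.sq_sqrt (by positivity)]
  have e6 : ‖p - x k‖ ^ 2 = ‖u‖ ^ 2 - 2 * (s * ⟪u, G⟫) + s ^ 2 * ‖G‖ ^ 2 := by
    rw [show p - x k = u - s • G from by rw [hxk, hsG]; abel, norm_sub_sq_real,
      real_inner_smul_right, norm_smul, mul_pow, Real.norm_eq_abs, sq_abs]
  have e7 : (1 / 2) * (s⁻¹ * (‖u‖ ^ 2 - 2 * (s * ⟪u, G⟫) + s ^ 2 * ‖G‖ ^ 2))
      = (1 / 2) * (s⁻¹ * ‖u‖ ^ 2) - ⟪u, G⟫ + (s / 2) * ‖G‖ ^ 2 := by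
    field_simp
  have hsL' : s * L < 1 := (lt_div_iff₀ hL).mp hsL
  rw [hxk1, hsqrt, hsqrt, e6, e7]
  nlinarith [hA, hB, hC, hcomm, sq_nonneg ‖G‖]
end
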